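/- arXiv:2509.10268 — 3 statements merged into one kernel-verified Lean document; each statement's English description precedes it below -/
import Mathlib

section
/- Let ‖·‖ be a strictly monotone norm on real K×K matrices and γ : [0,1] → [0,1] strictly increasing with γ(0) = 0 and γ(1) = 1. Then the coefficient ψ_{‖·‖,γ} satisfies: (i) 0 ≤ ψ_{‖·‖,γ}(X,Y) ≤ 1; (ii) ψ_{‖·‖,γ}(X,Y) = 0 if and only if X and Y are independent; (iii) ψ_{‖·‖,γ}(X,Y) = 1 if and only if there exists a Borel measurable function h : ℋ → {1,…,K} with Y = h(X) almost surely; (iv) ψ_{‖·‖,γ}(X,Y) ≤ ψ_{‖·‖,γ}((X,Z),Y), with equality if and only if Y and Z are conditionally independent given X. -/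
open MeasureTheory ProbabilityTheory Filter Set

noncomputable section
set_option linter.unusedSectionVars false
set_option linter.unusedVariables false
set_option maxHeartbeats 1000000

/-- Indicator (as a real-valued function) of the event `Y = k`. -/
def ind {Ω : Type*} (Y : Ω → ℕ) (k : ℕ) : Ω → ℝ := fun ω => if Y ω = k then 1 else 0

/-- `p_k = P(Y = k)`. -/
def levelProb {Ω : Type*} [MeasurableSpace Ω] (P : Measure Ω) (Y : Ω → ℕ) (k : ℕ) : ℝ :=
  (P {ω | Y ω = k}).toReal

/-- Covariance of two real-valued random variables. -/
def cov {Ω : Type*} [MeasurableSpace Ω] (P : Measure Ω) (f g : Ω → ℝ) : ℝ :=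
  ∫ ω, f ω * g ω ∂P - (∫ ω, f ω ∂P) * (∫ ω, g ω ∂P)

/-- `Q_k(X) = P(Y = k ∣ X)`, the conditional expectation of `1{Y=k}` given `σ(X)`. -/
def condProb {Ω H : Type*} [MeasurableSpace Ω] [MeasurableSpace H]
    (P : Measure Ω) (X : Ω → H) (Y : Ω → ℕ) (k : ℕ) : Ω → ℝ :=
  P[ind Y k | MeasurableSpace.comap X inferInstance]

/-- The dependence coefficient
`ψ(X,Y) = (1/(K−1)) Σ_{k,l=1}^K Cov(Q_k(X), Q_l(X))² / (p_k p_l)`. -/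
def psi {Ω H : Type*} [MeasurableSpace Ω] [MeasurableSpace H]
    (P : Measure Ω) (X : Ω → H) (Y : Ω → ℕ) (K : ℕ) : ℝ :=
  (1 / ((K : ℝ) - 1)) * ∑ k ∈ Finset.Icc 1 K, ∑ l ∈ Finset.Icc 1 K,
    (cov P (condProb P X Y k) (condProb P X Y l)) ^ 2 / (levelProb P Y k * levelProb P Y l)

/-- The covariance matrix `Var(Q(X))` of the random vector `Q(X) = (Q_1(X),…,Q_K(X))`,
indexed by `Fin K` (index `k` corresponds to level `k+1`). -/
def covMatrix {Ω H : Type*} [MeasurableSpace Ω] [MeasurableSpace H]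
    (P : Measure Ω) (X : Ω → H) (Y : Ω → ℕ) (K : ℕ) : Matrix (Fin K) (Fin K) ℝ :=
  fun k l => cov P (condProb P X Y ((k : ℕ) + 1)) (condProb P X Y ((l : ℕ) + 1))

/-- The covariance matrix `Var(Q(Y))` of the one-hot vector of `Y`: diagonal entries
`p_k − p_k²`, off-diagonal entries `−p_k p_l`. -/
def varQY {Ω : Type*} [MeasurableSpace Ω] (P : Measure Ω) (Y : Ω → ℕ) (K : ℕ) :
    Matrix (Fin K) (Fin K) ℝ := fun k l =>
  if k = l then levelProb P Y ((k : ℕ) + 1) - (levelProb P Y ((k : ℕ) + 1)) ^ 2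
  else -(levelProb P Y ((k : ℕ) + 1) * levelProb P Y ((l : ℕ) + 1))

section Aux

variable {Ω : Type*} {mΩ : MeasurableSpace Ω} {P : Measure Ω} [IsProbabilityMeasure P]
  {Y : Ω → ℕ} {K : ℕ}

lemma ind_eq_indicator (Y : Ω → ℕ) (k : ℕ) :
    ind Y k = Set.indicator {ω | Y ω = k} (fun _ => (1:ℝ)) := by
  funext ω; simp [ind, Set.indicator_apply, Set.mem_setOf_eq]

lemma measurableSet_level (hY : Measurable Y) (k : ℕ) : MeasurableSet {ω | Y ω = k} :=
  hY (measurableSet_singleton k)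

lemma stronglyMeasurable_ind (hY : Measurable Y) (k : ℕ) : StronglyMeasurable (ind Y k) := by
  rw [ind_eq_indicator]
  exact (stronglyMeasurable_const.indicator (measurableSet_level hY k))

lemma ind_abs_le_one (Y : Ω → ℕ) (k : ℕ) (ω : Ω) : |ind Y k ω| ≤ 1 := by
  simp only [ind]; split <;> simp

lemma integrable_ind (hY : Measurable Y) (k : ℕ) : Integrable (ind Y k) P := by
  refine Integrable.mono' (integrable_const 1) (stronglyMeasurable_ind hY k).aestronglyMeasurable
    (ae_of_all _ fun ω => ?_)
  simpa using ind_abs_le_one Y k ω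

lemma integral_ind (hY : Measurable Y) (k : ℕ) : ∫ ω, ind Y k ω ∂P = levelProb P Y k := by
  rw [show (fun ω => ind Y k ω) = Set.indicator {ω | Y ω = k} (fun _ => (1:ℝ)) from
    ind_eq_indicator Y k, integral_indicator (measurableSet_level hY k), setIntegral_const,
    smul_eq_mul, mul_one, levelProb, measureReal_def]

lemma sum_ind (hYr : ∀ ω, Y ω ∈ Finset.Icc 1 K) (ω : Ω) :
    ∑ k ∈ Finset.Icc 1 K, ind Y k ω = 1 := by
  have : ∑ k ∈ Finset.Icc 1 K, ind Y k ω
      = ∑ k ∈ Finset.Icc 1 K, if Y ω = k then (1:ℝ) else 0 := rfl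
  rw [this, Finset.sum_ite_eq (Finset.Icc 1 K) (Y ω) (fun _ => (1:ℝ)), if_pos (hYr ω)]

lemma sum_levelProb (hY : Measurable Y) (hYr : ∀ ω, Y ω ∈ Finset.Icc 1 K) :
    ∑ k ∈ Finset.Icc 1 K, levelProb P Y k = 1 := by
  have h : ∑ k ∈ Finset.Icc 1 K, levelProb P Y k
      = ∫ ω, ∑ k ∈ Finset.Icc 1 K, ind Y k ω ∂P := by
    rw [integral_finset_sum _ (fun k _ => integrable_ind hY k)]
    exact (Finset.sum_congr rfl fun k _ => (integral_ind hY k).symm)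
  rw [h, integral_congr_ae (ae_of_all _ fun ω => sum_ind hYr ω)]
  simp

lemma levelProb_nonneg : 0 ≤ levelProb P Y k := ENNReal.toReal_nonneg

lemma levelProb_pos (hk : 0 < P {ω | Y ω = k}) : 0 < levelProb P Y k :=
  ENNReal.toReal_pos hk.ne' (measure_ne_top _ _)

end Aux

section Aux2
variable {Ω : Type*} {mΩ : MeasurableSpace Ω} {P : Measure Ω} [IsProbabilityMeasure P]

structure BddRV {Ω : Type*} {mΩ : MeasurableSpace Ω} (P : @Measure Ω mΩ) (f : Ω → ℝ) (C : ℝ) : Prop where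
  meas : AEStronglyMeasurable f P
  bdd : ∀ᵐ ω ∂P, |f ω| ≤ C

namespace BddRV

variable {f g : Ω → ℝ} {C D : ℝ}

lemma integrable (hf : BddRV P f C) : Integrable f P :=
  Integrable.mono' (integrable_const C) hf.meas (hf.bdd.mono fun ω h => by simpa using h)

lemma congr (hf : BddRV P f C) (h : f =ᵐ[P] g) : BddRV P g C :=
  ⟨hf.meas.congr h, (hf.bdd.and h).mono fun ω ⟨h1, h2⟩ => h2 ▸ h1⟩

lemma nonneg_C (hf : BddRV P f C) : 0 ≤ C := by
  by_contra hC
  push_neg at hC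
  have hb := hf.bdd
  rw [ae_iff] at hb
  have h2 : {ω | ¬ |f ω| ≤ C} = Set.univ :=
    Set.eq_univ_of_forall fun ω => not_le.mpr (lt_of_lt_of_le hC (abs_nonneg _))
  rw [h2] at hb
  simp [measure_univ] at hb

lemma mul (hf : BddRV P f C) (hg : BddRV P g D) : BddRV P (fun ω => f ω * g ω) (C * D) := by
  refine ⟨hf.meas.mul hg.meas, ?_⟩
  filter_upwards [hf.bdd, hg.bdd] with ω h1 h2
  calc |f ω * g ω| = |f ω| * |g ω| := abs_mul _ _
    _ ≤ C * D := mul_le_mul h1 h2 (abs_nonneg _) ((abs_nonneg _).trans h1)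

lemma integrable_mul (hf : BddRV P f C) (hg : BddRV P g D) :
    Integrable (fun ω => f ω * g ω) P := (hf.mul hg).integrable

lemma sub (hf : BddRV P f C) (hg : BddRV P g D) : BddRV P (fun ω => f ω - g ω) (C + D) := by
  refine ⟨hf.meas.sub hg.meas, ?_⟩
  filter_upwards [hf.bdd, hg.bdd] with ω h1 h2
  exact (abs_sub _ _).trans (add_le_add h1 h2)

lemma condexp {m : MeasurableSpace Ω} (hm : m ≤ mΩ) (hf : BddRV P f C) :
    BddRV P (P[f|m]) C := by
  refine ⟨stronglyMeasurable_condExp.mono hm |>.aestronglyMeasurable, ?_⟩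
  have hC : 0 ≤ C := hf.nonneg_C
  have hb : ∀ᵐ ω ∂P, |f ω| ≤ ((⟨C, hC⟩ : NNReal) : ℝ) := by simpa using hf.bdd
  have := ae_bdd_condExp_of_ae_bdd (μ := P) (m := m) hb
  exact this

end BddRV

variable {f g : Ω → ℝ} {C D : ℝ} {m : MeasurableSpace Ω}

lemma cov_congr_ae {f' g' : Ω → ℝ} (hf : f =ᵐ[P] f') (hg : g =ᵐ[P] g') :
    @cov Ω mΩ P f g = @cov Ω mΩ P f' g' := by
  unfold cov
  rw [integral_congr_ae hf, integral_congr_ae hg,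
    integral_congr_ae (show (fun ω => f ω * g ω) =ᵐ[P] fun ω => f' ω * g' ω from hf.mul hg)]

lemma cov_comm : @cov Ω mΩ P f g = @cov Ω mΩ P g f := by
  unfold cov
  rw [mul_comm (∫ ω, f ω ∂P)]
  congr 1
  exact integral_congr_ae (ae_of_all _ fun ω => mul_comm _ _)

lemma integral_sub_sq (hf : BddRV P f C) (c : ℝ) :
    ∫ ω, (f ω - c)^2 ∂P = ∫ ω, f ω * f ω ∂P - 2*c*(∫ ω, f ω ∂P) + c^2 := by
  have h1 : Integrable (fun ω => f ω * f ω) P := hf.integrable_mul hf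
  have h2 : Integrable f P := hf.integrable
  have hA : Integrable (fun ω => f ω * f ω - 2*c*(f ω)) P := h1.sub (h2.const_mul (2*c))
  have hexp : (fun ω => (f ω - c)^2) = fun ω => (f ω * f ω - 2*c*(f ω)) + c^2 := by
    funext ω; ring
  rw [hexp, integral_add hA (integrable_const _), integral_sub h1 (h2.const_mul (2*c)),
    integral_const_mul, integral_const]
  simp [measure_univ]

lemma cov_self_eq (hf : BddRV P f C) :
    @cov Ω mΩ P f f = ∫ ω, (f ω - ∫ ω', f ω' ∂P)^2 ∂P := by
  rw [integral_sub_sq hf]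
  unfold cov
  ring

lemma cov_self_nonneg (hf : BddRV P f C) : 0 ≤ @cov Ω mΩ P f f := by
  rw [cov_self_eq hf]
  exact integral_nonneg fun ω => sq_nonneg _

lemma integral_condexp_mul_self (hm : m ≤ mΩ) (hf : BddRV P f C) :
    ∫ ω, (P[f|m]) ω * f ω ∂P = ∫ ω, (P[f|m]) ω * (P[f|m]) ω ∂P := by
  have hsm : StronglyMeasurable[m] (P[f|m]) := stronglyMeasurable_condExp
  have hce : BddRV P (P[f|m]) C := hf.condexp hm
  have hfg : Integrable (P[f|m] * f) P := hce.integrable_mul hf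
  have h := condExp_mul_of_stronglyMeasurable_left (μ := P) hsm hfg hf.integrable
  calc ∫ ω, (P[f|m]) ω * f ω ∂P = ∫ ω, (P[(P[f|m] * f)|m]) ω ∂P :=
        (integral_condExp hm).symm
    _ = ∫ ω, ((P[f|m]) * (P[f|m])) ω ∂P := integral_congr_ae h
    _ = ∫ ω, (P[f|m]) ω * (P[f|m]) ω ∂P := rfl

lemma integral_sq_sub_condexp (hm : m ≤ mΩ) (hf : BddRV P f C) :
    ∫ ω, (f ω - (P[f|m]) ω)^2 ∂P
      = ∫ ω, f ω * f ω ∂P - ∫ ω, (P[f|m]) ω * (P[f|m]) ω ∂P := by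
  have hce : BddRV P (P[f|m]) C := hf.condexp hm
  have h1 : Integrable (fun ω => f ω * f ω) P := hf.integrable_mul hf
  have h2 : Integrable (fun ω => (P[f|m]) ω * f ω) P := hce.integrable_mul hf
  have h3 : Integrable (fun ω => (P[f|m]) ω * (P[f|m]) ω) P := hce.integrable_mul hce
  have key := integral_condexp_mul_self hm hf
  have hA : Integrable (fun ω => f ω * f ω - 2*((P[f|m]) ω * f ω)) P :=
    h1.sub (h2.const_mul 2)
  have hexp : (fun ω => (f ω - (P[f|m]) ω)^2)
      = fun ω => (f ω * f ω - 2*((P[f|m]) ω * f ω)) + (P[f|m]) ω * (P[f|m]) ω := by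
    funext ω; ring
  rw [hexp, integral_add hA h3, integral_sub h1 (h2.const_mul 2), integral_const_mul, key]
  ring

lemma cov_self_sub_condexp (hm : m ≤ mΩ) (hf : BddRV P f C) :
    @cov Ω mΩ P f f - @cov Ω mΩ P (P[f|m]) (P[f|m]) = ∫ ω, (f ω - (P[f|m]) ω)^2 ∂P := by
  rw [integral_sq_sub_condexp hm hf]
  unfold cov
  rw [integral_condExp hm]
  ring

lemma cov_condexp_le (hm : m ≤ mΩ) (hf : BddRV P f C) :
    @cov Ω mΩ P (P[f|m]) (P[f|m]) ≤ @cov Ω mΩ P f f := by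
  have h := cov_self_sub_condexp hm hf
  have h2 : 0 ≤ ∫ ω, (f ω - (P[f|m]) ω)^2 ∂P := integral_nonneg fun ω => sq_nonneg _
  linarith

lemma ae_eq_condexp_of_cov_eq (hm : m ≤ mΩ) (hf : BddRV P f C)
    (h : @cov Ω mΩ P f f = @cov Ω mΩ P (P[f|m]) (P[f|m])) : f =ᵐ[P] P[f|m] := by
  have h0 : ∫ ω, (f ω - (P[f|m]) ω)^2 ∂P = 0 := by
    rw [← cov_self_sub_condexp hm hf, h, sub_self]
  have hd : BddRV P (fun ω => f ω - (P[f|m]) ω) (C + C) := hf.sub (hf.condexp hm)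
  have hint : Integrable (fun ω => (f ω - (P[f|m]) ω)^2) P := by
    have := hd.integrable_mul hd
    simpa [sq] using this
  have hz := (integral_eq_zero_iff_of_nonneg (fun ω => sq_nonneg _) hint).mp h0
  filter_upwards [hz] with ω hω
  have h1 : (f ω - (P[f|m]) ω)^2 = 0 := hω
  have h2 := pow_eq_zero_iff (n := 2) (by norm_num) |>.mp h1
  linarith

end Aux2

section Aux3

lemma quad_expand {K : ℕ} (M : Matrix (Fin K) (Fin K) ℝ) (k l : Fin K) (t : ℝ) :
    dotProduct (star (fun i => (if i = l then (1:ℝ) else 0) + t * (if i = k then 1 else 0)))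
      (M.mulVec (fun i => (if i = l then (1:ℝ) else 0) + t * (if i = k then 1 else 0)))
    = (M l l + t * M l k) + t * (M k l + t * M k k) := by
  have inner : ∀ i, (∑ j, M i j * ((if j = l then (1:ℝ) else 0) + t * (if j = k then 1 else 0)))
      = M i l + t * M i k := by
    intro i
    have h : ∀ j, M i j * ((if j = l then (1:ℝ) else 0) + t * (if j = k then 1 else 0))
        = (if j = l then M i j else 0) + t * (if j = k then M i j else 0) := by
      intro j; split_ifs <;> ring
    rw [Finset.sum_congr rfl fun j _ => h j, Finset.sum_add_distrib,
      Finset.sum_ite_eq' Finset.univ l (fun j => M i j), ← Finset.mul_sum,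
      Finset.sum_ite_eq' Finset.univ k (fun j => M i j)]
    simp
  have houter : ∀ i : Fin K,
      ((if i = l then (1:ℝ) else 0) + t * (if i = k then 1 else 0)) * (M i l + t * M i k)
      = (if i = l then M i l + t * M i k else 0) + t * (if i = k then M i l + t * M i k else 0) := by
    intro i; split_ifs <;> ring
  have hstar : star (fun i => (if i = l then (1:ℝ) else 0) + t * (if i = k then 1 else 0))
      = (fun i : Fin K => (if i = l then (1:ℝ) else 0) + t * (if i = k then 1 else 0)) := by
    funext i; simp
  rw [hstar]
  have h1 : (M.mulVec (fun i => (if i = l then (1:ℝ) else 0) + t * (if i = k then 1 else 0)))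
      = fun i => M i l + t * M i k := by
    funext i
    exact inner i
  rw [dotProduct, h1]
  rw [Finset.sum_congr rfl fun i _ => houter i, Finset.sum_add_distrib,
    Finset.sum_ite_eq' Finset.univ l, ← Finset.mul_sum,
    Finset.sum_ite_eq' Finset.univ k]
  simp

lemma psd_offdiag_eq_zero {K : ℕ} {M : Matrix (Fin K) (Fin K) ℝ} (hM : M.PosSemidef)
    {k : Fin K} (hk : M k k = 0) (l : Fin K) : M k l = 0 := by
  have hsym : M k l = M l k := by
    have h1 := hM.1
    rw [Matrix.IsHermitian] at h1
    have h2 := congrFun (congrFun h1 l) k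
    simpa [Matrix.conjTranspose_apply] using h2
  by_contra hne
  set c := M k l with hc
  have key : ∀ t : ℝ, 0 ≤ M l l + 2 * t * c := by
    intro t
    have h := (Matrix.posSemidef_iff_dotProduct_mulVec.mp hM).2 (fun i => (if i = l then (1:ℝ) else 0) + t * (if i = k then 1 else 0))
    rw [quad_expand M k l t] at h
    rw [hk] at h
    rw [← hsym] at h
    linarith
  have h2 := key (-(M l l + 1) / (2 * c))
  have h3 : 2 * (-(M l l + 1) / (2 * c)) * c = -(M l l + 1) := by
    field_simp
  rw [h3] at h2
  linarith

end Aux3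

section Aux4
variable {Ω : Type*} {mΩ : MeasurableSpace Ω} {P : Measure Ω} [IsProbabilityMeasure P] {K : ℕ}
  {m : MeasurableSpace Ω}

lemma bddRV_sum (g : Fin K → Ω → ℝ) (hg : ∀ k, BddRV P (g k) 1) (v : Fin K → ℝ) :
    BddRV P (fun ω => ∑ k, v k * g k ω) (∑ k, |v k|) := by
  constructor
  · exact Finset.aestronglyMeasurable_fun_sum _ (fun k _ => ((hg k).meas.const_mul (v k)))
  · filter_upwards [ae_all_iff.mpr fun k => (hg k).bdd] with ω hω
    calc |∑ k, v k * g k ω| ≤ ∑ k, |v k * g k ω| := Finset.abs_sum_le_sum_abs _ _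
      _ ≤ ∑ k, |v k| := by
          refine Finset.sum_le_sum fun k _ => ?_
          rw [abs_mul]
          calc |v k| * |g k ω| ≤ |v k| * 1 := mul_le_mul_of_nonneg_left (hω k) (abs_nonneg _)
            _ = |v k| := mul_one _

lemma cov_sum_sum (g : Fin K → Ω → ℝ) (hg : ∀ k, BddRV P (g k) 1) (v : Fin K → ℝ) :
    @cov Ω mΩ P (fun ω => ∑ k, v k * g k ω) (fun ω => ∑ k, v k * g k ω)
      = ∑ k, ∑ l, v k * v l * @cov Ω mΩ P (g k) (g l) := by
  unfold cov
  have hint : ∀ k : Fin K, Integrable (g k) P := fun k => (hg k).integrable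
  have h1 : ∫ ω, (∑ k, v k * g k ω) ∂P = ∑ k, v k * ∫ ω, g k ω ∂P := by
    rw [integral_finset_sum _ (fun k _ => (hint k).const_mul (v k))]
    exact Finset.sum_congr rfl fun k _ => integral_const_mul _ _
  have h2 : ∫ ω, (∑ k, v k * g k ω) * (∑ l, v l * g l ω) ∂P
      = ∑ k, ∑ l, v k * v l * ∫ ω, g k ω * g l ω ∂P := by
    have hexp : ∀ ω, (∑ k, v k * g k ω) * (∑ l, v l * g l ω)
        = ∑ k, ∑ l, v k * v l * (g k ω * g l ω) := by
      intro ω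
      rw [Finset.sum_mul_sum]
      refine Finset.sum_congr rfl fun k _ => Finset.sum_congr rfl fun l _ => by ring
    simp_rw [hexp]
    rw [integral_finset_sum _ (fun k _ => integrable_finset_sum _
      (fun l _ => (((hg k).integrable_mul (hg l)).const_mul _)))]
    refine Finset.sum_congr rfl fun k _ => ?_
    rw [integral_finset_sum _ (fun l _ => (((hg k).integrable_mul (hg l)).const_mul _))]
    exact Finset.sum_congr rfl fun l _ => integral_const_mul _ _
  rw [h1, h2, Finset.sum_mul_sum, ← Finset.sum_sub_distrib]
  refine Finset.sum_congr rfl fun k _ => ?_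
  rw [← Finset.sum_sub_distrib]
  refine Finset.sum_congr rfl fun l _ => by ring

lemma posSemidef_cov (g : Fin K → Ω → ℝ) (hg : ∀ k, BddRV P (g k) 1) :
    Matrix.PosSemidef (Matrix.of fun k l => @cov Ω mΩ P (g k) (g l)) := by
  refine Matrix.posSemidef_iff_dotProduct_mulVec.mpr ⟨?_, ?_⟩
  · rw [Matrix.IsHermitian]
    ext k l
    simp only [Matrix.conjTranspose_apply, Matrix.of_apply, star_trivial]
    exact cov_comm
  · intro x
    have hG := bddRV_sum g hg x
    have hkey : dotProduct (star x)
        ((Matrix.of fun k l => @cov Ω mΩ P (g k) (g l)).mulVec x)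
        = ∑ k, ∑ l, x k * x l * @cov Ω mΩ P (g k) (g l) := by
      rw [show star x = x from funext fun i => star_trivial _, dotProduct]
      refine Finset.sum_congr rfl fun k _ => ?_
      rw [show ((Matrix.of fun k l => @cov Ω mΩ P (g k) (g l)).mulVec x) k
        = ∑ l, @cov Ω mΩ P (g k) (g l) * x l from rfl, Finset.mul_sum]
      exact Finset.sum_congr rfl fun l _ => by ring
    rw [hkey, ← cov_sum_sum g hg x]
    exact cov_self_nonneg hG

lemma condexp_sum_ae (hm : m ≤ mΩ) (g : Fin K → Ω → ℝ) (hg : ∀ k, BddRV P (g k) 1)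
    (v : Fin K → ℝ) :
    P[fun ω => ∑ k, v k * g k ω|m] =ᵐ[P] fun ω => ∑ k, v k * (P[g k|m]) ω := by
  have h1 : (fun ω => ∑ k, v k * g k ω) = ∑ k : Fin K, (fun ω => v k * g k ω) := by
    funext ω; rw [Finset.sum_apply]
  rw [h1]
  have h2 := condExp_finset_sum (μ := P) (m := m) (s := Finset.univ)
      (f := fun (k : Fin K) => fun ω => v k * g k ω) (fun k _ => ((hg k).integrable.const_mul (v k)))
  refine h2.trans ?_
  have h3 : ∀ k : Fin K, P[fun ω => v k * g k ω|m] =ᵐ[P] fun ω => v k * (P[g k|m]) ω := by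
    intro k
    have := condExp_smul (μ := P) (m := m) (v k) (g k)
    exact this
  filter_upwards [ae_all_iff.mpr h3] with ω hω
  rw [Finset.sum_apply]
  exact Finset.sum_congr rfl fun k _ => hω k

lemma posSemidef_cov_sub (hm : m ≤ mΩ) (g : Fin K → Ω → ℝ) (hg : ∀ k, BddRV P (g k) 1) :
    Matrix.PosSemidef (Matrix.of fun k l =>
      @cov Ω mΩ P (g k) (g l) - @cov Ω mΩ P (P[g k|m]) (P[g l|m])) := by
  have hf : ∀ k : Fin K, BddRV P (P[g k|m]) 1 := fun k => (hg k).condexp hm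
  refine Matrix.posSemidef_iff_dotProduct_mulVec.mpr ⟨?_, ?_⟩
  · rw [Matrix.IsHermitian]
    ext k l
    simp only [Matrix.conjTranspose_apply, Matrix.of_apply, star_trivial]
    rw [cov_comm (f := g l) (g := g k), cov_comm (f := P[g l|m]) (g := P[g k|m])]
  · intro x
    have hG := bddRV_sum g hg x
    set G : Ω → ℝ := fun ω => ∑ k, x k * g k ω with hGdef
    set F : Ω → ℝ := fun ω => ∑ k, x k * (P[g k|m]) ω with hFdef
    have hFae : P[G|m] =ᵐ[P] F := condexp_sum_ae hm g hg x
    have hkey : dotProduct (star x)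
        ((Matrix.of fun k l =>
          @cov Ω mΩ P (g k) (g l) - @cov Ω mΩ P (P[g k|m]) (P[g l|m])).mulVec x)
        = (∑ k, ∑ l, x k * x l * @cov Ω mΩ P (g k) (g l))
          - ∑ k, ∑ l, x k * x l * @cov Ω mΩ P (P[g k|m]) (P[g l|m]) := by
      rw [show star x = x from funext fun i => star_trivial _, dotProduct,
        ← Finset.sum_sub_distrib]
      refine Finset.sum_congr rfl fun k _ => ?_
      rw [show ((Matrix.of fun k l =>
          @cov Ω mΩ P (g k) (g l) - @cov Ω mΩ P (P[g k|m]) (P[g l|m])).mulVec x) k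
        = ∑ l, (@cov Ω mΩ P (g k) (g l) - @cov Ω mΩ P (P[g k|m]) (P[g l|m])) * x l from rfl,
        Finset.mul_sum, ← Finset.sum_sub_distrib]
      exact Finset.sum_congr rfl fun l _ => by ring
    rw [hkey, ← cov_sum_sum g hg x, ← cov_sum_sum _ hf x]
    have hcovF : @cov Ω mΩ P F F = @cov Ω mΩ P (P[G|m]) (P[G|m]) :=
      cov_congr_ae hFae.symm hFae.symm
    rw [show (fun ω => ∑ k, x k * g k ω) = G from rfl,
      show (fun ω => ∑ k, x k * (P[g k|m]) ω) = F from rfl, hcovF]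
    have := cov_condexp_le (C := ∑ k, |x k|) hm hG
    linarith

end Aux4

section Aux5
variable {Ω : Type*} {mΩ : MeasurableSpace Ω} {P : Measure Ω} [IsProbabilityMeasure P] {K : ℕ}
  {Y : Ω → ℕ}

lemma bddRV_ind (hY : Measurable Y) (k : ℕ) : BddRV P (ind Y k) 1 :=
  ⟨(stronglyMeasurable_ind hY k).aestronglyMeasurable, ae_of_all _ (ind_abs_le_one Y k)⟩

lemma cov_ind_ind (hY : Measurable Y) (k l : ℕ) :
    @cov Ω mΩ P (ind Y k) (ind Y l)
      = (if k = l then levelProb P Y k else 0) - levelProb P Y k * levelProb P Y l := by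
  unfold cov
  rw [integral_ind hY, integral_ind hY]
  congr 1
  by_cases hkl : k = l
  · subst hkl
    rw [if_pos rfl, ← integral_ind hY k]
    refine integral_congr_ae (ae_of_all _ fun ω => ?_)
    by_cases h : Y ω = k <;> simp [ind, h]
  · rw [if_neg hkl]
    have hzero : (fun ω => ind Y k ω * ind Y l ω) = fun _ => (0:ℝ) := by
      funext ω
      unfold ind
      split_ifs with h1 h2
      · exact absurd (h1 ▸ h2) hkl
      · norm_num
      · norm_num
      · norm_num
    rw [show ∫ ω, ind Y k ω * ind Y l ω ∂P = ∫ _, (0:ℝ) ∂P from integral_congr_ae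
      (ae_of_all _ fun ω => congrFun hzero ω), integral_zero]

lemma varQY_eq_cov (hY : Measurable Y) :
    varQY P Y K = Matrix.of (fun k l : Fin K =>
      @cov Ω mΩ P (ind Y ((k:ℕ)+1)) (ind Y ((l:ℕ)+1))) := by
  funext k l
  rw [Matrix.of_apply, cov_ind_ind hY]
  unfold varQY
  by_cases hkl : k = l
  · subst hkl
    simp [pow_two]
  · have hne : (k:ℕ)+1 ≠ (l:ℕ)+1 := by
      intro h
      exact hkl (Fin.ext (by omega))
    rw [if_neg hkl, if_neg hne]
    ring

end Aux5

section Aux6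
variable {Ω H : Type*} {mΩ : MeasurableSpace Ω} {P : Measure Ω} [IsProbabilityMeasure P] {K : ℕ}
  {Y : Ω → ℕ} [MeasurableSpace H] {X : Ω → H}

lemma ae_const_of_cov_self_zero {f : Ω → ℝ} {C : ℝ} (hf : BddRV P f C)
    (h : @cov Ω mΩ P f f = 0) : f =ᵐ[P] fun _ => ∫ ω, f ω ∂P := by
  have h0 : ∫ ω, (f ω - ∫ ω', f ω' ∂P)^2 ∂P = 0 := by rw [← cov_self_eq hf, h]
  have hd : BddRV P (fun ω => f ω - ∫ ω', f ω' ∂P) (C + |∫ ω', f ω' ∂P|) := by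
    refine hf.sub ⟨aestronglyMeasurable_const, ae_of_all _ fun ω => le_refl _⟩
  have hint : Integrable (fun ω => (f ω - ∫ ω', f ω' ∂P)^2) P := by
    have := hd.integrable_mul hd
    simpa [sq] using this
  have hz := (integral_eq_zero_iff_of_nonneg (fun ω => sq_nonneg _) hint).mp h0
  filter_upwards [hz] with ω hω
  have h1 : (f ω - ∫ ω', f ω' ∂P)^2 = 0 := hω
  have h2 := pow_eq_zero_iff (n := 2) (by norm_num) |>.mp h1
  linarith

lemma setIntegral_ind (hY : Measurable Y) (k : ℕ) {s : Set Ω} (hs : MeasurableSet s) :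
    ∫ ω in s, ind Y k ω ∂P = (P ({ω | Y ω = k} ∩ s)).toReal := by
  rw [show (fun ω => ind Y k ω) = Set.indicator {ω | Y ω = k} (fun _ => (1:ℝ)) from
    ind_eq_indicator Y k, integral_indicator (measurableSet_level hY k),
    Measure.restrict_restrict (measurableSet_level hY k), setIntegral_const, smul_eq_mul, mul_one, measureReal_def]

/-- If `X` and `Y` are independent then the conditional probability is a.s. constant. -/
lemma condProb_ae_const_of_indep (hX : Measurable X) (hY : Measurable Y)
    (hind : IndepFun X Y P) (k : ℕ) :
    P[ind Y k | MeasurableSpace.comap X inferInstance]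
      =ᵐ[P] fun _ => levelProb P Y k := by
  have hm : MeasurableSpace.comap X inferInstance ≤ mΩ := hX.comap_le
  refine (ae_eq_condExp_of_forall_setIntegral_eq hm (integrable_ind hY k)
    (fun s _ _ => integrableOn_const (measure_ne_top _ _))
    (fun s hs hμs => ?_) (stronglyMeasurable_const.aestronglyMeasurable )).symm
  obtain ⟨A, hA, rfl⟩ := hs
  rw [setIntegral_const, setIntegral_ind hY k (hm _ ⟨A, hA, rfl⟩)]
  have hkey := (indepFun_iff_measure_inter_preimage_eq_mul.mp hind) A {k} hA
    (measurableSet_singleton k)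
  have h2 : {ω | Y ω = k} ∩ X ⁻¹' A = X ⁻¹' A ∩ Y ⁻¹' {k} := by
    ext ω; simp [Set.mem_preimage, and_comm]
  rw [h2, hkey, ENNReal.toReal_mul]
  rw [smul_eq_mul, measureReal_def]
  unfold levelProb
  have : Y ⁻¹' {k} = {ω | Y ω = k} := rfl
  rw [this]

lemma indep_of_condProb_ae_const (hX : Measurable X) (hY : Measurable Y)
    (hYr : ∀ ω, Y ω ∈ Finset.Icc 1 K)
    (hQ : ∀ k ∈ Finset.Icc 1 K, P[ind Y k | MeasurableSpace.comap X inferInstance]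
      =ᵐ[P] fun _ => levelProb P Y k) :
    IndepFun X Y P := by
  have hm : MeasurableSpace.comap X inferInstance ≤ mΩ := hX.comap_le
  rw [indepFun_iff_measure_inter_preimage_eq_mul]
  intro A B hA hB
  -- step 1 : per level
  have step1 : ∀ k ∈ Finset.Icc 1 K,
      P (X ⁻¹' A ∩ Y ⁻¹' {k}) = P (X ⁻¹' A) * P (Y ⁻¹' {k}) := by
    intro k hk
    have hsA : MeasurableSet[MeasurableSpace.comap X inferInstance] (X ⁻¹' A) := ⟨A, hA, rfl⟩
    have hreal : (P ({ω | Y ω = k} ∩ X ⁻¹' A)).toReal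
        = (P (X ⁻¹' A)).toReal * levelProb P Y k := by
      rw [← setIntegral_ind hY k (hm _ hsA),
        ← setIntegral_condExp hm (integrable_ind hY k) hsA]
      rw [setIntegral_congr_ae (hm _ hsA) ((hQ k hk).mono fun ω hω _ => hω)]
      rw [setIntegral_const, smul_eq_mul, measureReal_def]
    have h2 : X ⁻¹' A ∩ Y ⁻¹' {k} = {ω | Y ω = k} ∩ X ⁻¹' A := by
      ext ω; simp [Set.mem_preimage, and_comm]
    rw [h2]
    have hfin1 : P ({ω | Y ω = k} ∩ X ⁻¹' A) ≠ ⊤ := measure_ne_top _ _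
    have hfin2 : P (X ⁻¹' A) * P (Y ⁻¹' {k}) ≠ ⊤ :=
      ENNReal.mul_ne_top (measure_ne_top _ _) (measure_ne_top _ _)
    rw [← ENNReal.toReal_eq_toReal_iff' hfin1 hfin2, hreal, ENNReal.toReal_mul]
    unfold levelProb
    rw [show Y ⁻¹' {k} = {ω | Y ω = k} from rfl]
  -- step 2 : decompose B
  classical
  set s : Finset ℕ := (Finset.Icc 1 K).filter (· ∈ B) with hs
  have hYB : Y ⁻¹' B = ⋃ k ∈ s, Y ⁻¹' {k} := by
    ext ω
    simp only [Set.mem_preimage, Set.mem_iUnion, Set.mem_singleton_iff, hs, Finset.mem_filter]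
    constructor
    · intro h
      exact ⟨Y ω, ⟨hYr ω, h⟩, rfl⟩
    · rintro ⟨k, ⟨_, hkB⟩, rfl⟩
      exact hkB
  have hdisj : (s : Set ℕ).PairwiseDisjoint (fun k => Y ⁻¹' {k}) := by
    intro i _ j _ hij
    simp only [Function.onFun, Set.disjoint_left]
    rintro ω h1 h2
    simp only [Set.mem_preimage, Set.mem_singleton_iff] at h1 h2
    exact hij (h1 ▸ h2 ▸ rfl)
  have hdisj2 : (s : Set ℕ).PairwiseDisjoint (fun k => X ⁻¹' A ∩ Y ⁻¹' {k}) := by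
    intro i hi j hj hij
    exact (hdisj hi hj hij).mono Set.inter_subset_right Set.inter_subset_right
  have hmeas : ∀ k ∈ s, MeasurableSet (Y ⁻¹' {k}) := fun k _ => hY (measurableSet_singleton k)
  have h1 : P (X ⁻¹' A ∩ Y ⁻¹' B) = ∑ k ∈ s, P (X ⁻¹' A ∩ Y ⁻¹' {k}) := by
    rw [hYB, Set.inter_iUnion₂, measure_biUnion_finset hdisj2
      (fun k hk => (hX hA).inter (hmeas k hk))]
  have h2 : P (Y ⁻¹' B) = ∑ k ∈ s, P (Y ⁻¹' {k}) := by
    rw [hYB, measure_biUnion_finset hdisj hmeas]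
  rw [h1, h2, Finset.mul_sum]
  refine Finset.sum_congr rfl fun k hk => ?_
  exact step1 k (Finset.mem_filter.mp hk).1

lemma condexp_ae_eq_self_of_ae_eq_meas {m : MeasurableSpace Ω} (hm : m ≤ mΩ)
    {f g : Ω → ℝ} (hfg : f =ᵐ[P] g) (hgm : StronglyMeasurable[m] g)
    (hfi : Integrable f P) : P[f|m] =ᵐ[P] f := by
  have hgi : Integrable g P := hfi.congr hfg
  calc P[f|m] =ᵐ[P] P[g|m] := condExp_congr_ae hfg
    _ =ᵐ[P] g := by rw [condExp_of_stronglyMeasurable hm hgm hgi]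
    _ =ᵐ[P] f := hfg.symm

end Aux6

section Aux7
variable {Ω H H' : Type*} {mΩ : MeasurableSpace Ω} {P : Measure Ω} [IsProbabilityMeasure P]
  [MeasurableSpace H] [MeasurableSpace H'] {X : Ω → H} {Z : Ω → H'} {Y : Ω → ℕ} {K : ℕ}

lemma ind_nonneg (Y : Ω → ℕ) (k : ℕ) (ω : Ω) : 0 ≤ ind Y k ω := by
  unfold ind; split <;> norm_num

lemma comap_le_comap_pair :
    MeasurableSpace.comap X inferInstance ≤
      MeasurableSpace.comap (fun ω => (X ω, Z ω)) inferInstance := by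
  rintro s ⟨A, hA, rfl⟩
  exact ⟨A ×ˢ Set.univ, hA.prod MeasurableSet.univ, by ext ω; simp⟩

lemma comap_snd_le_comap_pair :
    MeasurableSpace.comap Z inferInstance ≤
      MeasurableSpace.comap (fun ω => (X ω, Z ω)) inferInstance := by
  rintro s ⟨B, hB, rfl⟩
  exact ⟨Set.univ ×ˢ B, MeasurableSet.univ.prod hB, by ext ω; simp⟩

lemma setIntegral_eq_on_pair (hX : Measurable X) (hZ : Measurable Z)
    {f g : Ω → ℝ} (hf : Integrable f P) (hg : Integrable g P)
    (hfpos : 0 ≤ᵐ[P] f) (hgpos : 0 ≤ᵐ[P] g)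
    (hrect : ∀ (A : Set H) (B : Set H'), MeasurableSet A → MeasurableSet B →
      ∫ ω in X ⁻¹' A ∩ Z ⁻¹' B, f ω ∂P = ∫ ω in X ⁻¹' A ∩ Z ⁻¹' B, g ω ∂P)
    {s : Set Ω}
    (hs : MeasurableSet[MeasurableSpace.comap (fun ω => (X ω, Z ω)) inferInstance] s) :
    ∫ ω in s, f ω ∂P = ∫ ω in s, g ω ∂P := by
  obtain ⟨S, hS, rfl⟩ := hs
  set pXZ : Ω → H × H' := fun ω => (X ω, Z ω) with hp
  have hpXZ : Measurable pXZ := hX.prodMk hZ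
  have conv : ∀ (φ : Ω → ℝ), Integrable φ P → 0 ≤ᵐ[P] φ → ∀ (u : Set Ω), MeasurableSet u →
      ∫ ω in u, φ ω ∂P = ((P.withDensity fun ω => ENNReal.ofReal (φ ω)) u).toReal := by
    intro φ hφ hφpos u hu
    rw [withDensity_apply _ hu,
      integral_eq_lintegral_of_nonneg_ae (ae_restrict_of_ae hφpos)
        hφ.aestronglyMeasurable.restrict]
  haveI hWf : IsFiniteMeasure (P.withDensity fun ω => ENNReal.ofReal (f ω)) :=
    isFiniteMeasure_withDensity hf.lintegral_lt_top.ne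
  haveI hWg : IsFiniteMeasure (P.withDensity fun ω => ENNReal.ofReal (g ω)) :=
    isFiniteMeasure_withDensity hg.lintegral_lt_top.ne
  set νf := Measure.map pXZ (P.withDensity fun ω => ENNReal.ofReal (f ω)) with hνf
  set νg := Measure.map pXZ (P.withDensity fun ω => ENNReal.ofReal (g ω)) with hνg
  have hrect' : ∀ (A : Set H) (B : Set H'), MeasurableSet A → MeasurableSet B →
      νf (A ×ˢ B) = νg (A ×ˢ B) := by
    intro A B hA hB
    have hpre : pXZ ⁻¹' (A ×ˢ B) = X ⁻¹' A ∩ Z ⁻¹' B := by ext ω; simp [hp]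
    rw [hνf, hνg, Measure.map_apply hpXZ (hA.prod hB), Measure.map_apply hpXZ (hA.prod hB), hpre]
    have hu : MeasurableSet (X ⁻¹' A ∩ Z ⁻¹' B) := (hX hA).inter (hZ hB)
    have h3 := hrect A B hA hB
    rw [conv f hf hfpos _ hu, conv g hg hgpos _ hu] at h3
    exact (ENNReal.toReal_eq_toReal_iff' (measure_ne_top _ _) (measure_ne_top _ _)).mp h3
  have hkey : νf = νg := by
    refine ext_of_generate_finite _ generateFrom_prod.symm isPiSystem_prod ?_ ?_
    · rintro _ ⟨A, hA, B, hB, rfl⟩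
      exact hrect' A B hA hB
    · have := hrect' Set.univ Set.univ MeasurableSet.univ MeasurableSet.univ
      simpa [Set.univ_prod_univ] using this
  have hu : MeasurableSet (pXZ ⁻¹' S) := hpXZ hS
  rw [conv f hf hfpos _ hu, conv g hg hgpos _ hu,
    ← Measure.map_apply hpXZ hS, ← Measure.map_apply hpXZ hS]
  rw [← hνf, ← hνg, hkey]

lemma indicator_preimage_singleton_eq_ind (k : ℕ) :
    Set.indicator (Y ⁻¹' {k}) (fun _ => (1:ℝ)) = ind Y k := by
  funext ω
  by_cases h : Y ω = k <;> simp [Set.indicator_apply, ind, Set.mem_preimage, h]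

lemma condProb_pair_ae_eq_of_condIndep [StandardBorelSpace Ω]
    (hX : Measurable X) (hZ : Measurable Z) (hY : Measurable Y)
    (hci : CondIndepFun (MeasurableSpace.comap X inferInstance) hX.comap_le Y Z P) (k : ℕ) :
    P[ind Y k | MeasurableSpace.comap (fun ω => (X ω, Z ω)) inferInstance]
      =ᵐ[P] P[ind Y k | MeasurableSpace.comap X inferInstance] := by
  have hm₁ : MeasurableSpace.comap X inferInstance ≤ mΩ := hX.comap_le
  have hm₂ : MeasurableSpace.comap (fun ω => (X ω, Z ω)) inferInstance ≤ mΩ :=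
    (hX.prodMk hZ).comap_le
  have h12 : MeasurableSpace.comap X inferInstance ≤
      MeasurableSpace.comap (fun ω => (X ω, Z ω)) inferInstance := comap_le_comap_pair
  have hmul := (condIndepFun_iff_condExp_inter_preimage_eq_mul hY hZ).mp hci
  have hQb : BddRV P (P[ind Y k | MeasurableSpace.comap X inferInstance]) 1 :=
    (bddRV_ind hY k).condexp hm₁
  refine (ae_eq_condExp_of_forall_setIntegral_eq hm₂ (integrable_ind hY k)
    (fun s _ _ => integrable_condExp.integrableOn)
    (fun s hs hμs => ?_) ((stronglyMeasurable_condExp.mono h12).aestronglyMeasurable)).symm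
  refine setIntegral_eq_on_pair hX hZ integrable_condExp (integrable_ind hY k)
    (condExp_nonneg (ae_of_all _ (ind_nonneg Y k))) (ae_of_all _ (ind_nonneg Y k)) ?_ hs
  -- rectangles
  intro A B hA hB
  set Q : Ω → ℝ := P[ind Y k | MeasurableSpace.comap X inferInstance] with hQdef
  set b : Ω → ℝ := Set.indicator (Z ⁻¹' B) (fun _ => (1:ℝ)) with hbdef
  have hbB : BddRV P b 1 := by
    refine ⟨(stronglyMeasurable_const.indicator (hZ hB)).aestronglyMeasurable,
      ae_of_all _ fun ω => ?_⟩
    rw [hbdef]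
    by_cases h : ω ∈ Z ⁻¹' B <;> simp [Set.indicator_apply, h]
  have hbm : StronglyMeasurable[MeasurableSpace.comap (fun ω => (X ω, Z ω)) inferInstance] b := by
    refine stronglyMeasurable_const.indicator ?_
    exact comap_snd_le_comap_pair (H := H) (X := X) _ ⟨B, hB, rfl⟩
  have hQm : StronglyMeasurable[MeasurableSpace.comap X inferInstance] Q :=
    stronglyMeasurable_condExp
  have hsA : MeasurableSet[MeasurableSpace.comap X inferInstance] (X ⁻¹' A) := ⟨A, hA, rfl⟩
  have husA : MeasurableSet (X ⁻¹' A) := hX hA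
  have hutB : MeasurableSet (Z ⁻¹' B) := hZ hB
  -- indicator trick on both sides
  have htrick : ∀ (φ : Ω → ℝ), Integrable φ P →
      ∫ ω in X ⁻¹' A ∩ Z ⁻¹' B, φ ω ∂P = ∫ ω in X ⁻¹' A, φ ω * b ω ∂P := by
    intro φ hφ
    have h1 : ∀ ω, φ ω * b ω = Set.indicator (Z ⁻¹' B) φ ω := by
      intro ω
      rw [hbdef]
      by_cases hω : ω ∈ Z ⁻¹' B <;> simp [Set.indicator_apply, hω]
    rw [setIntegral_congr_ae husA (ae_of_all _ fun ω _ => h1 ω),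
      setIntegral_indicator hutB]
  -- LHS : ∫_{A∩B} Q
  have hQb2 : Integrable (fun ω => Q ω * b ω) P := hQb.integrable_mul hbB
  have hIb2 : Integrable (fun ω => ind Y k ω * b ω) P := (bddRV_ind hY k).integrable_mul hbB
  rw [htrick Q hQb.integrable, htrick (ind Y k) (integrable_ind hY k)]
  -- both sides equal ∫_{X⁻¹A} Q * P[b|m₁]
  have hpull1 : P[(fun ω => Q ω * b ω)|MeasurableSpace.comap X inferInstance]
      =ᵐ[P] fun ω => Q ω * (P[b|MeasurableSpace.comap X inferInstance]) ω := by
    have := condExp_mul_of_stronglyMeasurable_left (μ := P) hQm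
      (by exact hQb2) hbB.integrable
    exact this
  -- step for ind side
  have hstep2 : P[(fun ω => ind Y k ω * b ω)|
        MeasurableSpace.comap (fun ω => (X ω, Z ω)) inferInstance]
      =ᵐ[P] fun ω => b ω *
        (P[ind Y k|MeasurableSpace.comap (fun ω => (X ω, Z ω)) inferInstance]) ω := by
    have hcomm : (fun ω => ind Y k ω * b ω) = b * ind Y k := by
      funext ω; exact mul_comm _ _
    rw [hcomm]
    exact condExp_mul_of_stronglyMeasurable_left (μ := P) hbm
      (by rw [← hcomm]; exact hIb2) (integrable_ind hY k)
  -- relate P[ind|m₂] with the conditional independence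
  have hindic : (fun ω => ind Y k ω * b ω)
      = Set.indicator (Y ⁻¹' {k} ∩ Z ⁻¹' B) (fun _ => (1:ℝ)) := by
    funext ω
    rw [hbdef]
    by_cases h1 : Y ω = k <;> by_cases h2 : ω ∈ Z ⁻¹' B <;>
      simp [ind, Set.indicator_apply, h1, h2, Set.mem_preimage]
  have hmulk := hmul {k} B (measurableSet_singleton k) hB
  -- conclude via equality of conditional expectations over X⁻¹A
  have hcondeq : P[(fun ω => ind Y k ω * b ω)|MeasurableSpace.comap X inferInstance]
      =ᵐ[P] fun ω => Q ω * (P[b|MeasurableSpace.comap X inferInstance]) ω := by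
    have e1 : P[(fun ω => ind Y k ω * b ω)|MeasurableSpace.comap X inferInstance]
        =ᵐ[P] P[Set.indicator (Y ⁻¹' {k} ∩ Z ⁻¹' B) (fun _ => (1:ℝ))|
          MeasurableSpace.comap X inferInstance] := by
      rw [hindic]
    refine e1.trans (hmulk.trans ?_)
    have e2 : P[Set.indicator (Y ⁻¹' {k}) (fun _ => (1:ℝ))|MeasurableSpace.comap X inferInstance]
        = Q := by
      rw [indicator_preimage_singleton_eq_ind]
    have e3 : P[Set.indicator (Z ⁻¹' B) (fun _ => (1:ℝ))|MeasurableSpace.comap X inferInstance]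
        = P[b|MeasurableSpace.comap X inferInstance] := by rw [hbdef]
    refine Eventually.of_forall fun ω => ?_
    rw [e2, e3]
  -- now integrate over X⁻¹A
  calc ∫ ω in X ⁻¹' A, Q ω * b ω ∂P
      = ∫ ω in X ⁻¹' A, (P[(fun ω => Q ω * b ω)|MeasurableSpace.comap X inferInstance]) ω ∂P :=
        (setIntegral_condExp hm₁ hQb2 hsA).symm
    _ = ∫ ω in X ⁻¹' A, Q ω * (P[b|MeasurableSpace.comap X inferInstance]) ω ∂P :=
        setIntegral_congr_ae husA (hpull1.mono fun ω hω _ => hω)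
    _ = ∫ ω in X ⁻¹' A, (P[(fun ω => ind Y k ω * b ω)|MeasurableSpace.comap X inferInstance]) ω ∂P :=
        (setIntegral_congr_ae husA (hcondeq.mono fun ω hω _ => hω.symm))
    _ = ∫ ω in X ⁻¹' A, ind Y k ω * b ω ∂P := setIntegral_condExp hm₁ hIb2 hsA

end Aux7

section Aux8
variable {Ω H H' : Type*} {mΩ : MeasurableSpace Ω} {P : Measure Ω} [IsProbabilityMeasure P]
  [MeasurableSpace H] [MeasurableSpace H'] {X : Ω → H} {Z : Ω → H'} {Y : Ω → ℕ} {K : ℕ}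

lemma indicator_preimage_eq_sum (hYr : ∀ ω, Y ω ∈ Finset.Icc 1 K) (s : Set ℕ) [DecidablePred (· ∈ s)] (ω : Ω) :
    Set.indicator (Y ⁻¹' s) (fun _ => (1:ℝ)) ω
      = ∑ k ∈ (Finset.Icc 1 K).filter (· ∈ s), ind Y k ω := by
  have hsum : ∑ k ∈ (Finset.Icc 1 K).filter (· ∈ s), ind Y k ω
      = ∑ k ∈ (Finset.Icc 1 K).filter (· ∈ s), if Y ω = k then (1:ℝ) else 0 := rfl
  rw [hsum, Finset.sum_ite_eq ((Finset.Icc 1 K).filter (· ∈ s)) (Y ω) (fun _ => (1:ℝ))]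
  by_cases hω : Y ω ∈ s
  · rw [if_pos (Finset.mem_filter.mpr ⟨hYr ω, hω⟩)]
    simp [Set.indicator_apply, Set.mem_preimage, hω]
  · rw [if_neg (fun hmem => hω (Finset.mem_filter.mp hmem).2)]
    simp [Set.indicator_apply, Set.mem_preimage, hω]

lemma condIndep_of_condProb_pair_ae_eq [StandardBorelSpace Ω]
    (hX : Measurable X) (hZ : Measurable Z) (hY : Measurable Y)
    (hYr : ∀ ω, Y ω ∈ Finset.Icc 1 K)
    (hQ : ∀ k ∈ Finset.Icc 1 K,
      P[ind Y k | MeasurableSpace.comap (fun ω => (X ω, Z ω)) inferInstance]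
        =ᵐ[P] P[ind Y k | MeasurableSpace.comap X inferInstance]) :
    CondIndepFun (MeasurableSpace.comap X inferInstance) hX.comap_le Y Z P := by
  classical
  have hm₁ : MeasurableSpace.comap X inferInstance ≤ mΩ := hX.comap_le
  have hm₂ : MeasurableSpace.comap (fun ω => (X ω, Z ω)) inferInstance ≤ mΩ :=
    (hX.prodMk hZ).comap_le
  have h12 : MeasurableSpace.comap X inferInstance ≤
      MeasurableSpace.comap (fun ω => (X ω, Z ω)) inferInstance := comap_le_comap_pair
  rw [condIndepFun_iff_condExp_inter_preimage_eq_mul hY hZ]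
  intro s t hs ht
  set m₁ := MeasurableSpace.comap X inferInstance
  set m₂ := MeasurableSpace.comap (fun ω => (X ω, Z ω)) inferInstance
  set b : Ω → ℝ := Set.indicator (Z ⁻¹' t) (fun _ => (1:ℝ)) with hbdef
  have hbB : BddRV P b 1 := by
    refine ⟨(stronglyMeasurable_const.indicator (hZ ht)).aestronglyMeasurable,
      ae_of_all _ fun ω => ?_⟩
    rw [hbdef]
    by_cases h : ω ∈ Z ⁻¹' t <;> simp [Set.indicator_apply, h]
  have hbm2 : StronglyMeasurable[m₂] b :=
    stronglyMeasurable_const.indicator (comap_snd_le_comap_pair (H := H) (X := X) _ ⟨t, ht, rfl⟩)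
  set sf := (Finset.Icc 1 K).filter (· ∈ s) with hsf
  -- per-level claim
  have hk : ∀ k ∈ sf, P[(fun ω => ind Y k ω * b ω)|m₁]
      =ᵐ[P] fun ω => (P[ind Y k|m₁]) ω * (P[b|m₁]) ω := by
    intro k hks
    have hkIcc : k ∈ Finset.Icc 1 K := (Finset.mem_filter.mp hks).1
    have hIb : Integrable (fun ω => ind Y k ω * b ω) P := (bddRV_ind hY k).integrable_mul hbB
    have hQ2b : BddRV P (P[ind Y k|m₂]) 1 := (bddRV_ind hY k).condexp hm₂
    have hQ1b : BddRV P (P[ind Y k|m₁]) 1 := (bddRV_ind hY k).condexp hm₁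
    -- tower
    have e1 : P[(fun ω => ind Y k ω * b ω)|m₁]
        =ᵐ[P] P[P[(fun ω => ind Y k ω * b ω)|m₂]|m₁] :=
      (condExp_condExp_of_le h12 hm₂).symm
    -- pull out b at level m₂
    have e2 : P[(fun ω => ind Y k ω * b ω)|m₂] =ᵐ[P] fun ω => b ω * (P[ind Y k|m₂]) ω := by
      have hcomm : (fun ω => ind Y k ω * b ω) = b * ind Y k := by
        funext ω; exact mul_comm _ _
      rw [hcomm]
      exact condExp_mul_of_stronglyMeasurable_left (μ := P) hbm2
        (by rw [← hcomm]; exact hIb) (integrable_ind hY k)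
    -- replace P[ind|m₂] by P[ind|m₁]
    have e3 : (fun ω => b ω * (P[ind Y k|m₂]) ω) =ᵐ[P] fun ω => (P[ind Y k|m₁]) ω * b ω := by
      filter_upwards [hQ k hkIcc] with ω hω
      rw [hω]; ring
    -- pull out P[ind|m₁] at level m₁
    have e4 : P[(fun ω => (P[ind Y k|m₁]) ω * b ω)|m₁]
        =ᵐ[P] fun ω => (P[ind Y k|m₁]) ω * (P[b|m₁]) ω :=
      condExp_mul_of_stronglyMeasurable_left (μ := P) stronglyMeasurable_condExp
        (hQ1b.integrable_mul hbB) hbB.integrable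
    exact e1.trans ((condExp_congr_ae (e2.trans e3)).trans e4)
  -- decompose the indicator of the intersection
  have hdecomp : Set.indicator (Y ⁻¹' s ∩ Z ⁻¹' t) (fun _ => (1:ℝ))
      = fun ω => ∑ k ∈ sf, ind Y k ω * b ω := by
    funext ω
    have h1 : Set.indicator (Y ⁻¹' s ∩ Z ⁻¹' t) (fun _ => (1:ℝ)) ω
        = Set.indicator (Y ⁻¹' s) (fun _ => (1:ℝ)) ω * b ω := by
      rw [hbdef]
      by_cases h1 : ω ∈ Y ⁻¹' s <;> by_cases h2 : ω ∈ Z ⁻¹' t <;>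
        simp [Set.indicator_apply, h1, h2]
    rw [h1, indicator_preimage_eq_sum hYr s ω, Finset.sum_mul]
  have hsum_int : ∀ k ∈ sf, Integrable (fun ω => ind Y k ω * b ω) P :=
    fun k _ => (bddRV_ind hY k).integrable_mul hbB
  -- condexp of the sum
  have hsumeq : (fun ω => ∑ k ∈ sf, ind Y k ω * b ω)
      = ∑ k ∈ sf, (fun ω => ind Y k ω * b ω) := by
    funext ω; rw [Finset.sum_apply]
  have hLHS : P[Set.indicator (Y ⁻¹' s ∩ Z ⁻¹' t) (fun _ => (1:ℝ))|m₁]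
      =ᵐ[P] fun ω => ∑ k ∈ sf, (P[ind Y k|m₁]) ω * (P[b|m₁]) ω := by
    rw [hdecomp, hsumeq]
    refine (condExp_finset_sum hsum_int _).trans ?_
    filter_upwards [ae_all_iff.mpr fun k : ℕ => eventually_all.mpr
      (fun hks : k ∈ sf => hk k hks)] with ω hω
    rw [Finset.sum_apply]
    exact Finset.sum_congr rfl fun k hks => hω k hks
  -- the right factor
  have hYs : P[Set.indicator (Y ⁻¹' s) (fun _ => (1:ℝ))|m₁]
      =ᵐ[P] fun ω => ∑ k ∈ sf, (P[ind Y k|m₁]) ω := by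
    have hfun : Set.indicator (Y ⁻¹' s) (fun _ => (1:ℝ)) = ∑ k ∈ sf, ind Y k := by
      funext ω
      rw [indicator_preimage_eq_sum hYr s ω, Finset.sum_apply]
    rw [hfun]
    refine (condExp_finset_sum (fun k _ => integrable_ind hY k) _).trans ?_
    refine Eventually.of_forall fun ω => ?_
    rw [Finset.sum_apply]
  refine hLHS.trans ?_
  filter_upwards [hYs] with ω hω
  have : (P⟦Y ⁻¹' s|m₁⟧) ω * (P⟦Z ⁻¹' t|m₁⟧) ω
      = (∑ k ∈ sf, (P[ind Y k|m₁]) ω) * (P[b|m₁]) ω := by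
    rw [hω, hbdef]
  rw [this, Finset.sum_mul]

end Aux8

section Aux9

lemma exists_selector {H : Type*} [MeasurableSpace H] (K : ℕ) (hK : 1 ≤ K)
    (A : ℕ → Set H) (hA : ∀ k, MeasurableSet (A k)) :
    ∃ h : H → ℕ, Measurable h ∧ (∀ x, h x ∈ Finset.Icc 1 K) ∧
      ∀ x k, k ∈ Finset.Icc 1 K → x ∈ A k →
        (∀ j ∈ Finset.Icc 1 K, j ≠ k → x ∉ A j) → h x = k := by
  classical
  set p : H → ℕ → Prop := fun x k => k ∈ Finset.Icc 1 K ∧ x ∈ A k with hp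
  set h : H → ℕ := fun x => if hx : ∃ k, p x k then Nat.find hx else 1 with hh
  have hrange : ∀ x, h x ∈ Finset.Icc 1 K := by
    intro x
    rw [hh]
    simp only
    split_ifs with hx
    · exact (Nat.find_spec hx).1
    · simp only [Finset.mem_Icc]; omega
  have hcorrect : ∀ x k, k ∈ Finset.Icc 1 K → x ∈ A k →
      (∀ j ∈ Finset.Icc 1 K, j ≠ k → x ∉ A j) → h x = k := by
    intro x k hkI hxk huniq
    have hx : ∃ k, p x k := ⟨k, hkI, hxk⟩
    rw [hh]
    simp only
    rw [dif_pos hx]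
    by_contra hne
    have h1 := Nat.find_spec hx
    exact huniq (Nat.find hx) h1.1 hne h1.2
  refine ⟨h, ?_, hrange, hcorrect⟩
  refine measurable_to_countable' fun j => ?_
  have hEmeas : MeasurableSet {x | ∃ k, p x k} := by
    have hE : {x | ∃ k, p x k} = ⋃ k ∈ Finset.Icc 1 K, A k := by
      ext x
      simp only [Set.mem_setOf_eq, Set.mem_iUnion, hp]
      constructor
      · rintro ⟨k, hk1, hk2⟩; exact ⟨k, hk1, hk2⟩
      · rintro ⟨k, hk1, hk2⟩; exact ⟨k, hk1, hk2⟩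
    rw [hE]
    exact Finset.measurableSet_biUnion _ fun k _ => hA k
  have hpmeas : ∀ i, MeasurableSet {x | p x i} := by
    intro i
    by_cases hi : i ∈ Finset.Icc 1 K
    · have he : {x | p x i} = A i := by
        ext x
        rw [Set.mem_setOf_eq]
        exact ⟨fun hc => hc.2, fun hc => ⟨hi, hc⟩⟩
      rw [he]; exact hA i
    · have he : {x | p x i} = ∅ := by
        ext x
        simp only [Set.mem_setOf_eq, Set.mem_empty_iff_false]
        exact ⟨fun hc => hi hc.1, False.elim⟩
      rw [he]; exact MeasurableSet.empty
  have hset : h ⁻¹' {j} = ({x | ∃ k, p x k} ∩ ({x | p x j} ∩ ⋂ i ∈ Finset.range j, {x | ¬ p x i}))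
      ∪ ({x | ∃ k, p x k}ᶜ ∩ (if j = 1 then Set.univ else ∅)) := by
    ext x
    simp only [Set.mem_preimage, Set.mem_singleton_iff, Set.mem_union, Set.mem_inter_iff,
      Set.mem_compl_iff, Set.mem_setOf_eq, Set.mem_iInter, Finset.mem_range, hh]
    by_cases hx : ∃ k, p x k
    · rw [dif_pos hx, Nat.find_eq_iff hx]
      constructor
      · intro h1
        exact Or.inl ⟨hx, h1⟩
      · rintro (⟨-, h1⟩ | ⟨hnx, -⟩)
        · exact h1
        · exact absurd hx hnx
    · rw [dif_neg hx]
      constructor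
      · intro h1
        refine Or.inr ⟨hx, ?_⟩
        rw [if_pos h1.symm]
        trivial
      · rintro (⟨hx', -⟩ | ⟨-, hj⟩)
        · exact absurd hx' hx
        · by_cases h1 : j = 1
          · exact h1.symm
          · rw [if_neg h1] at hj
            exact absurd hj (Set.notMem_empty x)
  rw [hset]
  refine MeasurableSet.union (hEmeas.inter ((hpmeas j).inter
    (Finset.measurableSet_biInter _ fun i _ => (hpmeas i).compl))) (hEmeas.compl.inter ?_)
  split_ifs
  · exact MeasurableSet.univ
  · exact MeasurableSet.empty

lemma nm_nonneg {K : ℕ} (Nm : Matrix (Fin K) (Fin K) ℝ → ℝ)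
    (hN0 : ∀ A, Nm A = 0 ↔ A = 0)
    (hNsmul : ∀ (c : ℝ) A, Nm (c • A) = |c| * Nm A)
    (hNadd : ∀ A B, Nm (A + B) ≤ Nm A + Nm B) (A : Matrix (Fin K) (Fin K) ℝ) : 0 ≤ Nm A := by
  have h0 : Nm 0 = 0 := (hN0 0).mpr rfl
  have hneg : A + (-1 : ℝ) • A = 0 := by
    simp
  have h1 := hNadd A ((-1 : ℝ) • A)
  rw [hneg, h0, hNsmul] at h1
  simp only [abs_neg, abs_one, one_mul] at h1
  linarith

lemma nm_eq_iff_of_psd {K : ℕ} (Nm : Matrix (Fin K) (Fin K) ℝ → ℝ)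
    (hNstrict : ∀ A B : Matrix (Fin K) (Fin K) ℝ, A.PosSemidef → B.PosSemidef →
      (B - A).PosSemidef → A ≠ B → Nm A < Nm B)
    {A B : Matrix (Fin K) (Fin K) ℝ} (hA : A.PosSemidef) (hB : B.PosSemidef)
    (hBA : (B - A).PosSemidef) : Nm A = Nm B ↔ A = B := by
  constructor
  · intro h
    by_contra hne
    exact absurd h (ne_of_lt (hNstrict A B hA hB hBA hne))
  · intro h; rw [h]

lemma fin_of_mem_Icc {K k : ℕ} (hk : k ∈ Finset.Icc 1 K) : ∃ j : Fin K, (j : ℕ) + 1 = k := by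
  rw [Finset.mem_Icc] at hk
  exact ⟨⟨k - 1, by omega⟩, by simp; omega⟩

end Aux9

/-- Theorem 7: for any strictly monotone matrix norm `‖·‖` and any strictly increasing
`γ : [0,1] → [0,1]` with `γ(0)=0`, `γ(1)=1`, the coefficient
`ψ_{‖·‖,γ}(X,Y) = γ(‖Var(Q(X))‖ / ‖Var(Q(Y))‖)` satisfies (M1)–(M5). -/
theorem psi_norm_properties {Ω H H' : Type*} [MeasurableSpace Ω] [StandardBorelSpace Ω]
    [Nonempty Ω] [MetricSpace H]
    [MeasurableSpace H] [BorelSpace H] [TopologicalSpace.SeparableSpace H]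
    [MetricSpace H'] [MeasurableSpace H'] [BorelSpace H'] [TopologicalSpace.SeparableSpace H']
    (P : Measure Ω) [IsProbabilityMeasure P] (K : ℕ) (hK : 2 ≤ K)
    (X : Ω → H) (Z : Ω → H') (Y : Ω → ℕ)
    (hX : Measurable X) (hZ : Measurable Z) (hY : Measurable Y)
    (hYr : ∀ ω, Y ω ∈ Finset.Icc 1 K)
    (hp : ∀ k ∈ Finset.Icc 1 K, 0 < P {ω | Y ω = k})
    -- `Nm` is a norm on real `K×K` matrices …
    (Nm : Matrix (Fin K) (Fin K) ℝ → ℝ)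
    (hN0 : ∀ A, Nm A = 0 ↔ A = 0)
    (hNsmul : ∀ (c : ℝ) A, Nm (c • A) = |c| * Nm A)
    (hNadd : ∀ A B, Nm (A + B) ≤ Nm A + Nm B)
    -- … which is strictly monotone:
    (hNmono : ∀ A B : Matrix (Fin K) (Fin K) ℝ, A.PosSemidef → B.PosSemidef →
      (B - A).PosSemidef → Nm A ≤ Nm B)
    (hNstrict : ∀ A B : Matrix (Fin K) (Fin K) ℝ, A.PosSemidef → B.PosSemidef →
      (B - A).PosSemidef → A ≠ B → Nm A < Nm B)
    -- `γ : [0,1] → [0,1]` strictly increasing with `γ(0)=0`, `γ(1)=1`: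
    (γ : ℝ → ℝ) (hγmono : StrictMonoOn γ (Set.Icc 0 1))
    (hγmaps : Set.MapsTo γ (Set.Icc 0 1) (Set.Icc 0 1))
    (hγ0 : γ 0 = 0) (hγ1 : γ 1 = 1) :
    (0 ≤ γ (Nm (covMatrix P X Y K) / Nm (varQY P Y K)) ∧
      γ (Nm (covMatrix P X Y K) / Nm (varQY P Y K)) ≤ 1) ∧
    (γ (Nm (covMatrix P X Y K) / Nm (varQY P Y K)) = 0 ↔ IndepFun X Y P) ∧
    (γ (Nm (covMatrix P X Y K) / Nm (varQY P Y K)) = 1 ↔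
      ∃ h : H → ℕ, Measurable h ∧ (∀ x, h x ∈ Finset.Icc 1 K) ∧
        Y =ᵐ[P] fun ω => h (X ω)) ∧
    (γ (Nm (covMatrix P X Y K) / Nm (varQY P Y K)) ≤
      γ (Nm (covMatrix P (fun ω => (X ω, Z ω)) Y K) / Nm (varQY P Y K))) ∧
    (γ (Nm (covMatrix P X Y K) / Nm (varQY P Y K)) =
        γ (Nm (covMatrix P (fun ω => (X ω, Z ω)) Y K) / Nm (varQY P Y K)) ↔
      CondIndepFun (MeasurableSpace.comap X inferInstance) hX.comap_le Y Z P) := by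
  classical
  have hXZ : Measurable (fun ω => (X ω, Z ω)) := hX.prodMk hZ
  have hm₁ := hX.comap_le
  have hm₂ := hXZ.comap_le
  have h12 : MeasurableSpace.comap X inferInstance ≤
      MeasurableSpace.comap (fun ω => (X ω, Z ω)) inferInstance := comap_le_comap_pair
  have hbind : ∀ k, BddRV P (ind Y k) 1 := bddRV_ind hY
  have hg1 : ∀ j : Fin K, BddRV P (P[ind Y ((j:ℕ)+1)|MeasurableSpace.comap X inferInstance]) 1 :=
    fun j => (hbind _).condexp hm₁
  have hg2 : ∀ j : Fin K,
      BddRV P (P[ind Y ((j:ℕ)+1)|MeasurableSpace.comap (fun ω => (X ω, Z ω)) inferInstance]) 1 :=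
    fun j => (hbind _).condexp hm₂
  have htow : ∀ j : Fin K,
      P[P[ind Y ((j:ℕ)+1)|MeasurableSpace.comap (fun ω => (X ω, Z ω)) inferInstance]|
        MeasurableSpace.comap X inferInstance]
      =ᵐ[P] P[ind Y ((j:ℕ)+1)|MeasurableSpace.comap X inferInstance] :=
    fun j => condExp_condExp_of_le h12 hm₂
  -- matrix identifications
  have hBcov : varQY P Y K = Matrix.of (fun k l : Fin K =>
      @cov Ω _ P (ind Y ((k:ℕ)+1)) (ind Y ((l:ℕ)+1))) := varQY_eq_cov hY
  have hA1eq : covMatrix P X Y K = Matrix.of (fun k l : Fin K =>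
      @cov Ω _ P (P[ind Y ((k:ℕ)+1)|MeasurableSpace.comap X inferInstance])
        (P[ind Y ((l:ℕ)+1)|MeasurableSpace.comap X inferInstance])) := rfl
  have hA2eq : covMatrix P (fun ω => (X ω, Z ω)) Y K = Matrix.of (fun k l : Fin K =>
      @cov Ω _ P (P[ind Y ((k:ℕ)+1)|MeasurableSpace.comap (fun ω => (X ω, Z ω)) inferInstance])
        (P[ind Y ((l:ℕ)+1)|MeasurableSpace.comap (fun ω => (X ω, Z ω)) inferInstance])) := rfl
  -- PSD facts
  have hBpsd : (varQY P Y K).PosSemidef := by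
    rw [hBcov]; exact posSemidef_cov _ (fun j => hbind _)
  have hA1psd : (covMatrix P X Y K).PosSemidef := by
    rw [hA1eq]; exact posSemidef_cov _ hg1
  have hA2psd : (covMatrix P (fun ω => (X ω, Z ω)) Y K).PosSemidef := by
    rw [hA2eq]; exact posSemidef_cov _ hg2
  have hBA1 : (varQY P Y K - covMatrix P X Y K).PosSemidef := by
    have hps := posSemidef_cov_sub hm₁ (fun j : Fin K => ind Y ((j:ℕ)+1)) (fun j => hbind _)
    have hmat : varQY P Y K - covMatrix P X Y K = Matrix.of (fun k l : Fin K =>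
        @cov Ω _ P (ind Y ((k:ℕ)+1)) (ind Y ((l:ℕ)+1))
        - @cov Ω _ P (P[ind Y ((k:ℕ)+1)|MeasurableSpace.comap X inferInstance])
            (P[ind Y ((l:ℕ)+1)|MeasurableSpace.comap X inferInstance])) := by
      funext k l
      rw [Matrix.sub_apply, hBcov, hA1eq]
      rfl
    rw [hmat]; exact hps
  have hBA2 : (varQY P Y K - covMatrix P (fun ω => (X ω, Z ω)) Y K).PosSemidef := by
    have hps := posSemidef_cov_sub hm₂ (fun j : Fin K => ind Y ((j:ℕ)+1)) (fun j => hbind _)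
    have hmat : varQY P Y K - covMatrix P (fun ω => (X ω, Z ω)) Y K
        = Matrix.of (fun k l : Fin K =>
        @cov Ω _ P (ind Y ((k:ℕ)+1)) (ind Y ((l:ℕ)+1))
        - @cov Ω _ P
            (P[ind Y ((k:ℕ)+1)|MeasurableSpace.comap (fun ω => (X ω, Z ω)) inferInstance])
            (P[ind Y ((l:ℕ)+1)|MeasurableSpace.comap (fun ω => (X ω, Z ω)) inferInstance])) := by
      funext k l
      rw [Matrix.sub_apply, hBcov, hA2eq]
      rfl
    rw [hmat]; exact hps
  have hA21 : (covMatrix P (fun ω => (X ω, Z ω)) Y K - covMatrix P X Y K).PosSemidef := by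
    have hps := posSemidef_cov_sub hm₁
      (fun j : Fin K => P[ind Y ((j:ℕ)+1)|MeasurableSpace.comap (fun ω => (X ω, Z ω)) inferInstance])
      hg2
    have hmat : covMatrix P (fun ω => (X ω, Z ω)) Y K - covMatrix P X Y K
        = Matrix.of (fun k l : Fin K =>
        @cov Ω _ P
          (P[ind Y ((k:ℕ)+1)|MeasurableSpace.comap (fun ω => (X ω, Z ω)) inferInstance])
          (P[ind Y ((l:ℕ)+1)|MeasurableSpace.comap (fun ω => (X ω, Z ω)) inferInstance])
        - @cov Ω _ P
            (P[(P[ind Y ((k:ℕ)+1)|MeasurableSpace.comap (fun ω => (X ω, Z ω)) inferInstance])|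
              MeasurableSpace.comap X inferInstance])
            (P[(P[ind Y ((l:ℕ)+1)|MeasurableSpace.comap (fun ω => (X ω, Z ω)) inferInstance])|
              MeasurableSpace.comap X inferInstance])) := by
      funext k l
      rw [Matrix.sub_apply, hA2eq, hA1eq]
      have hc := cov_congr_ae (P := P) (htow k) (htow l)
      rw [Matrix.of_apply, Matrix.of_apply, Matrix.of_apply, hc]
    rw [hmat]; exact hps
  -- norm facts
  have hNnn := nm_nonneg Nm hN0 hNsmul hNadd
  have hp1 : 0 < levelProb P Y 1 := levelProb_pos (hp 1 (by rw [Finset.mem_Icc]; omega))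
  have hp2 : 0 < levelProb P Y 2 := levelProb_pos (hp 2 (by rw [Finset.mem_Icc]; omega))
  have hsum := sum_levelProb (P := P) hY hYr
  have hp1lt : levelProb P Y 1 < 1 := by
    have h1mem : (1:ℕ) ∈ Finset.Icc 1 K := by rw [Finset.mem_Icc]; omega
    have hsplit := Finset.add_sum_erase (Finset.Icc 1 K) (levelProb P Y) h1mem
    have h2mem : (2:ℕ) ∈ (Finset.Icc 1 K).erase 1 := by
      rw [Finset.mem_erase, Finset.mem_Icc]; omega
    have hle2 : levelProb P Y 2 ≤ ∑ x ∈ (Finset.Icc 1 K).erase 1, levelProb P Y x :=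
      Finset.single_le_sum (fun i _ => levelProb_nonneg (P := P) (Y := Y) (k := i)) h2mem
    rw [hsum] at hsplit
    linarith
  have hBne : varQY P Y K ≠ 0 := by
    intro h0
    have j0 : Fin K := ⟨0, by omega⟩
    have hentry : varQY P Y K ⟨0, by omega⟩ ⟨0, by omega⟩
        = levelProb P Y 1 - (levelProb P Y 1)^2 := by
      unfold varQY
      rw [if_pos rfl]
    rw [h0] at hentry
    simp only [Matrix.zero_apply] at hentry
    nlinarith
  have hNBne : Nm (varQY P Y K) ≠ 0 := fun h => hBne ((hN0 _).mp h)
  have hNB : 0 < Nm (varQY P Y K) := lt_of_le_of_ne (hNnn _) (Ne.symm hNBne)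
  have ht1mem : Nm (covMatrix P X Y K) / Nm (varQY P Y K) ∈ Set.Icc (0:ℝ) 1 :=
    ⟨div_nonneg (hNnn _) (hNnn _),
      (div_le_one hNB).mpr (hNmono _ _ hA1psd hBpsd hBA1)⟩
  have ht2mem : Nm (covMatrix P (fun ω => (X ω, Z ω)) Y K) / Nm (varQY P Y K) ∈ Set.Icc (0:ℝ) 1 :=
    ⟨div_nonneg (hNnn _) (hNnn _),
      (div_le_one hNB).mpr (hNmono _ _ hA2psd hBpsd hBA2)⟩
  have h0mem : (0:ℝ) ∈ Set.Icc (0:ℝ) 1 := ⟨le_refl 0, zero_le_one⟩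
  have h1mem' : (1:ℝ) ∈ Set.Icc (0:ℝ) 1 := ⟨zero_le_one, le_refl 1⟩
  have hγinj := hγmono.injOn
  refine ⟨⟨(hγmaps ht1mem).1, (hγmaps ht1mem).2⟩, ?_, ?_, ?_, ?_⟩
  · -- (ii) independence
    constructor
    · intro h
      have ht1z : Nm (covMatrix P X Y K) / Nm (varQY P Y K) = 0 :=
        hγinj ht1mem h0mem (by rw [h, hγ0])
      have hNA1 : Nm (covMatrix P X Y K) = 0 := by
        rcases div_eq_zero_iff.mp ht1z with h' | h'
        · exact h'
        · exact absurd h' hNBne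
      have hA10 : covMatrix P X Y K = 0 := (hN0 _).mp hNA1
      apply indep_of_condProb_ae_const hX hY hYr
      intro k hk
      obtain ⟨j, hj⟩ := fin_of_mem_Icc hk
      have hdiag : @cov Ω _ P (P[ind Y k|MeasurableSpace.comap X inferInstance])
          (P[ind Y k|MeasurableSpace.comap X inferInstance]) = 0 := by
        have h1 := congrFun (congrFun hA10 j) j
        rw [Matrix.zero_apply] at h1
        rw [← hj]
        exact h1
      have hconst := ae_const_of_cov_self_zero ((hbind k).condexp hm₁) hdiag
      have hint : ∫ ω, (P[ind Y k|MeasurableSpace.comap X inferInstance]) ω ∂P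
          = levelProb P Y k := by
        rw [integral_condExp hm₁, integral_ind hY]
      rw [hint] at hconst
      exact hconst
    · intro hind
      have hA10 : covMatrix P X Y K = 0 := by
        funext k l
        have hqk := condProb_ae_const_of_indep hX hY hind ((k:ℕ)+1)
        have hql := condProb_ae_const_of_indep hX hY hind ((l:ℕ)+1)
        rw [Matrix.zero_apply]
        show @cov Ω _ P (P[ind Y ((k:ℕ)+1)|MeasurableSpace.comap X inferInstance])
          (P[ind Y ((l:ℕ)+1)|MeasurableSpace.comap X inferInstance]) = 0
        rw [cov_congr_ae hqk hql]
        simp [cov, integral_const, measure_univ]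
      rw [hA10, (hN0 0).mpr rfl, zero_div, hγ0]
  · -- (iii) functional dependence
    constructor
    · intro h
      have ht11 : Nm (covMatrix P X Y K) / Nm (varQY P Y K) = 1 :=
        hγinj ht1mem h1mem' (by rw [h, hγ1])
      have hNA1B : Nm (covMatrix P X Y K) = Nm (varQY P Y K) := by
        field_simp at ht11
        exact ht11
      have hA1B : covMatrix P X Y K = varQY P Y K :=
        (nm_eq_iff_of_psd Nm hNstrict hA1psd hBpsd hBA1).mp hNA1B
      have hae : ∀ k ∈ Finset.Icc 1 K,
          ind Y k =ᵐ[P] P[ind Y k|MeasurableSpace.comap X inferInstance] := by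
        intro k hk
        obtain ⟨j, hj⟩ := fin_of_mem_Icc hk
        apply ae_eq_condexp_of_cov_eq hm₁ (hbind k)
        have h1 := congrFun (congrFun hA1B j) j
        rw [hBcov] at h1
        rw [← hj]
        exact h1.symm
      have hchoice : ∀ k, ∃ A : Set H, MeasurableSet A ∧
          X ⁻¹' A = {ω | (1:ℝ)/2 ≤ (P[ind Y k|MeasurableSpace.comap X inferInstance]) ω} := by
        intro k
        have hms : MeasurableSet[MeasurableSpace.comap X inferInstance]
            {ω | (1:ℝ)/2 ≤ (P[ind Y k|MeasurableSpace.comap X inferInstance]) ω} :=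
          measurableSet_le measurable_const stronglyMeasurable_condExp.measurable
        exact hms
      choose A hAmeas hApre using hchoice
      obtain ⟨h', hhmeas, hhrange, hhcorrect⟩ := exists_selector K (by omega) A hAmeas
      refine ⟨h', hhmeas, hhrange, ?_⟩
      have hae_all : ∀ᵐ ω ∂P, ∀ k, k ∈ Finset.Icc 1 K →
          ind Y k ω = (P[ind Y k|MeasurableSpace.comap X inferInstance]) ω := by
        rw [ae_all_iff]
        intro k
        by_cases hk : k ∈ Finset.Icc 1 K
        · exact (hae k hk).mono fun ω hω _ => hω
        · exact ae_of_all _ fun ω hk' => absurd hk' hk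
      filter_upwards [hae_all] with ω hω
      have hk0 := hYr ω
      have h1 : (P[ind Y (Y ω)|MeasurableSpace.comap X inferInstance]) ω = 1 := by
        rw [← hω (Y ω) hk0]
        simp [ind]
      have hx0 : X ω ∈ A (Y ω) := by
        have hmem : ω ∈ X ⁻¹' A (Y ω) := by
          rw [hApre (Y ω)]
          show (1:ℝ)/2 ≤ _
          rw [h1]
          norm_num
        exact hmem
      have huniq : ∀ j ∈ Finset.Icc 1 K, j ≠ Y ω → X ω ∉ A j := by
        intro j hj hne hmem
        have hmem2 : ω ∈ X ⁻¹' A j := hmem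
        rw [hApre j] at hmem2
        have hle : (1:ℝ)/2 ≤ (P[ind Y j|MeasurableSpace.comap X inferInstance]) ω := hmem2
        rw [← hω j hj] at hle
        have hind0 : ind Y j ω = 0 := by
          simp only [ind, ite_eq_right_iff]
          intro hc
          exact absurd hc.symm hne
        rw [hind0] at hle
        norm_num at hle
      exact (hhcorrect (X ω) (Y ω) hk0 hx0 huniq).symm
    · rintro ⟨h', hhmeas, hhrange, haeY⟩
      have hQeq : ∀ k, P[ind Y k|MeasurableSpace.comap X inferInstance] =ᵐ[P] ind Y k := by
        intro k
        refine condexp_ae_eq_self_of_ae_eq_meas hm₁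
          (g := ind (fun ω => h' (X ω)) k) ?_ ?_ (integrable_ind hY k)
        · filter_upwards [haeY] with ω hω
          simp only [ind]
          rw [hω]
        · rw [ind_eq_indicator]
          refine stronglyMeasurable_const.indicator ?_
          exact ⟨h' ⁻¹' {k}, hhmeas (measurableSet_singleton k), rfl⟩
      have hA1B : covMatrix P X Y K = varQY P Y K := by
        funext k l
        rw [hBcov]
        show @cov Ω _ P (P[ind Y ((k:ℕ)+1)|MeasurableSpace.comap X inferInstance])
          (P[ind Y ((l:ℕ)+1)|MeasurableSpace.comap X inferInstance]) = _
        rw [cov_congr_ae (hQeq _) (hQeq _)]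
        rfl
      rw [hA1B, div_self hNB.ne', hγ1]
  · -- (iv) monotonicity
    refine hγmono.monotoneOn ht1mem ht2mem ?_
    exact (div_le_div_iff_of_pos_right hNB).mpr (hNmono _ _ hA1psd hA2psd hA21)
  · -- (iv) equality iff conditional independence
    constructor
    · intro heq
      have ht12 : Nm (covMatrix P X Y K) / Nm (varQY P Y K)
          = Nm (covMatrix P (fun ω => (X ω, Z ω)) Y K) / Nm (varQY P Y K) :=
        hγinj ht1mem ht2mem heq
      have hN12 : Nm (covMatrix P X Y K) = Nm (covMatrix P (fun ω => (X ω, Z ω)) Y K) := by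
        rw [div_eq_div_iff hNBne hNBne] at ht12
        exact mul_right_cancel₀ hNBne ht12
      have hA12 : covMatrix P X Y K = covMatrix P (fun ω => (X ω, Z ω)) Y K :=
        (nm_eq_iff_of_psd Nm hNstrict hA1psd hA2psd hA21).mp hN12
      apply condIndep_of_condProb_pair_ae_eq hX hZ hY hYr
      intro k hk
      obtain ⟨j, hj⟩ := fin_of_mem_Icc hk
      have hcov : @cov Ω _ P
          (P[ind Y k|MeasurableSpace.comap (fun ω => (X ω, Z ω)) inferInstance])
          (P[ind Y k|MeasurableSpace.comap (fun ω => (X ω, Z ω)) inferInstance])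
          = @cov Ω _ P
            (P[(P[ind Y k|MeasurableSpace.comap (fun ω => (X ω, Z ω)) inferInstance])|
              MeasurableSpace.comap X inferInstance])
            (P[(P[ind Y k|MeasurableSpace.comap (fun ω => (X ω, Z ω)) inferInstance])|
              MeasurableSpace.comap X inferInstance]) := by
        have h1 := congrFun (congrFun hA12 j) j
        have h2 := cov_congr_ae (P := P) (htow j) (htow j)
        rw [← hj]
        have h1' : @cov Ω _ P (P[ind Y ((j:ℕ)+1)|MeasurableSpace.comap X inferInstance])
            (P[ind Y ((j:ℕ)+1)|MeasurableSpace.comap X inferInstance])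
            = @cov Ω _ P
              (P[ind Y ((j:ℕ)+1)|MeasurableSpace.comap (fun ω => (X ω, Z ω)) inferInstance])
              (P[ind Y ((j:ℕ)+1)|MeasurableSpace.comap (fun ω => (X ω, Z ω)) inferInstance]) := h1
        rw [← h1', ← h2]
      have hres := ae_eq_condexp_of_cov_eq hm₁ ((hbind k).condexp hm₂) hcov
      exact hres.trans (condExp_condExp_of_le h12 hm₂)
    · intro hci
      have hQ := condProb_pair_ae_eq_of_condIndep hX hZ hY hci
      have hA12 : covMatrix P X Y K = covMatrix P (fun ω => (X ω, Z ω)) Y K := by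
        funext k l
        show @cov Ω _ P (P[ind Y ((k:ℕ)+1)|MeasurableSpace.comap X inferInstance])
          (P[ind Y ((l:ℕ)+1)|MeasurableSpace.comap X inferInstance]) = _
        rw [cov_congr_ae (hQ ((k:ℕ)+1)).symm (hQ ((l:ℕ)+1)).symm]
        rfl
      rw [hA12]
end
end

section
/- Let X_1, X_2, … be i.i.d. Borel measurable random elements of a separable metric space (ℋ, d), with almost surely unique nearest neighbours in every sample {X_1,…,X_n}. Then, as n → ∞: (i) d(X_{N(1)}, X_1) → 0 almost surely; (ii) P(N(1) = N(2)) → 0. -/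
open MeasureTheory ProbabilityTheory Filter Set

noncomputable section

/-- `ω`-wise property characterizing a nearest-neighbour assignment `N`: for each sample
size `n ≥ 2` and each `i < n`, `N n i ω` is the index `j < n`, `j ≠ i`, uniquely (strictly)
minimizing `dist (X i ω) (X j ω)` over `j ≠ i`. -/
def IsNNFun {Ω H : Type*} [MetricSpace H] (X : ℕ → Ω → H) (N : ℕ → ℕ → Ω → ℕ) (ω : Ω) : Prop :=
  ∀ n, 2 ≤ n → ∀ i < n, N n i ω < n ∧ N n i ω ≠ i ∧
    ∀ j < n, j ≠ i → j ≠ N n i ω → dist (X i ω) (X (N n i ω) ω) < dist (X i ω) (X j ω)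

/-- Lemma S1: for i.i.d. random elements of a separable metric space with a.s. unique
nearest neighbours, (i) `X_{N(1)} → X_1` almost surely, and (ii) `P(N(1) = N(2)) → 0`.
(The samples are indexed from `0`, so `X_1, X_2` correspond to `X 0, X 1`.) -/
theorem nearest_neighbour_convergence {Ω H : Type*} [MeasurableSpace Ω] [MetricSpace H]
    [MeasurableSpace H] [BorelSpace H] [TopologicalSpace.SeparableSpace H]
    (P : Measure Ω) [IsProbabilityMeasure P]
    (X : ℕ → Ω → H) (hXm : ∀ i, Measurable (X i))
    (hiid : iIndepFun X P)
    (hident : ∀ i, IdentDistrib (X i) (X 0) P P)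
    (N : ℕ → ℕ → Ω → ℕ) (hN : ∀ᵐ ω ∂P, IsNNFun X N ω) :
    (∀ᵐ ω ∂P, Filter.Tendsto (fun n => dist (X (N n 0 ω) ω) (X 0 ω))
      Filter.atTop (nhds 0)) ∧
    Filter.Tendsto (fun n => P {ω | N n 0 ω = N n 1 ω}) Filter.atTop (nhds 0) := by
  classical
  have hΩ : Nonempty Ω := by
    by_contra h
    rw [not_nonempty_iff] at h
    have h1 : P univ = 1 := measure_univ
    rw [Set.eq_empty_of_isEmpty (univ : Set Ω), measure_empty] at h1
    exact zero_ne_one h1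
  have hH : Nonempty H := ⟨X 0 hΩ.some⟩
  set e : ℕ → H := TopologicalSpace.denseSeq H with he_def
  have he : DenseRange e := TopologicalSpace.denseRange_denseSeq H
  set μ : Measure H := Measure.map (X 0) P with hμ_def
  set B : ℕ → ℕ → Set H := fun k m => Metric.ball (e k) (1 / ((m : ℝ) + 1)) with hB_def
  have hBmeas : ∀ k m, MeasurableSet (B k m) := fun k m => Metric.isOpen_ball.measurableSet
  have hmap : ∀ i, Measure.map (X i) P = μ := fun i => (hident i).map_eq
  have hpre : ∀ i (s : Set H), MeasurableSet s → P (X i ⁻¹' s) = μ s := by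
    intro i s hs
    rw [← hmap i, Measure.map_apply (hXm i) hs]
  -- the union of all "null" balls in the countable family
  set E : Set H := ⋃ k, ⋃ m, ⋃ (_ : μ (B k m) = 0), B k m with hE_def
  have hEmeas : MeasurableSet E :=
    MeasurableSet.iUnion fun k => MeasurableSet.iUnion fun m =>
      MeasurableSet.iUnion fun _ => hBmeas k m
  have hE0 : μ E = 0 :=
    measure_iUnion_null fun k => measure_iUnion_null fun m => measure_iUnion_null fun h => h
  have hA2 : ∀ i, ∀ᵐ ω ∂P, X i ω ∉ E := by
    intro i
    have : P (X i ⁻¹' E) = 0 := by rw [hpre i E hEmeas, hE0]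
    rw [ae_iff]
    simp only [not_not]
    exact this
  -- second Borel-Cantelli: every ball of positive measure gets hit infinitely often
  have hA3 : ∀ᵐ ω ∂P, ∀ k m, μ (B k m) ≠ 0 → {j | X j ω ∈ B k m}.Infinite := by
    rw [ae_all_iff]
    intro k
    rw [ae_all_iff]
    intro m
    by_cases hB : μ (B k m) = 0
    · exact ae_of_all _ fun ω h => absurd hB h
    · have hsm : ∀ j, MeasurableSet (X j ⁻¹' (B k m)) := fun j => (hXm j) (hBmeas k m)
      have hind : iIndepSet (fun j => X j ⁻¹' (B k m)) P :=
        (iIndepSet_iff_meas_biInter hsm).2 fun S =>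
          hiid.measure_inter_preimage_eq_mul S (fun i _ => hBmeas k m)
      have hsum : (∑' j : ℕ, P (X j ⁻¹' (B k m))) = ⊤ := by
        have : ∀ j : ℕ, P (X j ⁻¹' (B k m)) = μ (B k m) := fun j => hpre j _ (hBmeas k m)
        rw [tsum_congr this]
        exact ENNReal.tsum_const_eq_top_of_ne_zero hB
      have hbc := measure_limsup_eq_one hsm hind hsum
      have hls : MeasurableSet (limsup (fun j => X j ⁻¹' (B k m)) atTop) :=
        MeasurableSet.measurableSet_limsup hsm
      have hae : ∀ᵐ ω ∂P, ω ∈ limsup (fun j => X j ⁻¹' (B k m)) atTop := by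
        rw [ae_iff]
        have := measure_compl hls (measure_ne_top P _)
        rw [hbc, measure_univ] at this
        simpa [Set.compl_setOf, Set.compl_def] using this
      filter_upwards [hae] with ω hω _
      rw [Filter.mem_limsup_iff_frequently_mem] at hω
      exact Nat.frequently_atTop_iff_infinite.1 hω
  -- key pointwise statement: the nearest-neighbour distance is eventually < ε
  have key : ∀ ω, IsNNFun X N ω →
      (∀ k m, μ (B k m) ≠ 0 → {j | X j ω ∈ B k m}.Infinite) →
      ∀ i, X i ω ∉ E → ∀ ε : ℝ, 0 < ε →
      ∀ᶠ n in atTop, dist (X (N n i ω) ω) (X i ω) < ε := by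
    intro ω hNN h3 i hiE ε hε
    obtain ⟨m, hm⟩ := exists_nat_one_div_lt (half_pos hε)
    obtain ⟨k, hk⟩ := he.exists_dist_lt (X i ω) (by positivity : (0:ℝ) < 1 / ((m:ℝ) + 1))
    have hxB : X i ω ∈ B k m := by
      simpa [hB_def, Metric.mem_ball] using hk
    have hBpos : μ (B k m) ≠ 0 := by
      intro h0
      exact hiE (Set.mem_iUnion.2 ⟨k, Set.mem_iUnion.2 ⟨m, Set.mem_iUnion.2 ⟨h0, hxB⟩⟩⟩)
    have hJ := h3 k m hBpos
    obtain ⟨j, hjJ, hji⟩ : ∃ j, X j ω ∈ B k m ∧ j ≠ i := by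
      obtain ⟨j, hj⟩ := (hJ.diff (Set.finite_singleton i)).nonempty
      exact ⟨j, hj.1, by simpa using hj.2⟩
    have hdistj : dist (X i ω) (X j ω) < ε := by
      have h1 : dist (X j ω) (e k) < 1 / ((m:ℝ) + 1) := by
        simpa [hB_def, Metric.mem_ball] using hjJ
      have h2 := dist_triangle (X i ω) (e k) (X j ω)
      rw [dist_comm (e k) (X j ω)] at h2
      linarith
    filter_upwards [eventually_ge_atTop (max (max (j + 1) (i + 1)) 2)] with n hn
    have hn2 : 2 ≤ n := le_trans (le_max_right _ _) hn
    have hjn : j < n := by omega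
    have hin : i < n := by omega
    obtain ⟨hlt, hne, hmin⟩ := hNN n hn2 i hin
    rcases eq_or_ne j (N n i ω) with hje | hje
    · rw [dist_comm, ← hje]; exact hdistj
    · have := hmin j hjn hji hje
      rw [dist_comm]
      linarith
  -- part (i)
  have part1 : ∀ᵐ ω ∂P, Filter.Tendsto (fun n => dist (X (N n 0 ω) ω) (X 0 ω))
      Filter.atTop (nhds 0) := by
    filter_upwards [hN, hA3, hA2 0] with ω hNN h3 h20
    rw [Metric.tendsto_atTop]
    intro ε hε
    obtain ⟨n₀, hn₀⟩ := (key ω hNN h3 0 h20 ε hε).exists_forall_of_atTop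
    exact ⟨n₀, fun n hn => by
      rw [Real.dist_eq, sub_zero, abs_of_nonneg dist_nonneg]
      exact hn₀ n hn⟩
  refine ⟨part1, ?_⟩
  -- part (ii)
  set M : ℕ → Set Ω := fun n => {ω | ∃ j, j < n ∧ j ≠ 0 ∧ j ≠ 1 ∧
      (∀ k, k < n → k ≠ 0 → dist (X 0 ω) (X j ω) ≤ dist (X 0 ω) (X k ω)) ∧
      (∀ k, k < n → k ≠ 1 → dist (X 1 ω) (X j ω) ≤ dist (X 1 ω) (X k ω))} with hM_def
  have hSC : SecondCountableTopology H := UniformSpace.secondCountable_of_separable H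
  have hMmeas : ∀ n, MeasurableSet (M n) := by
    intro n
    have hd : ∀ a b c : ℕ, MeasurableSet {ω : Ω | dist (X a ω) (X b ω) ≤ dist (X a ω) (X c ω)} :=
      fun a b c => measurableSet_le (((hXm a).dist (hXm b))) (((hXm a).dist (hXm c)))
    show MeasurableSet {ω : Ω | ∃ j, j < n ∧ j ≠ 0 ∧ j ≠ 1 ∧
      (∀ k, k < n → k ≠ 0 → dist (X 0 ω) (X j ω) ≤ dist (X 0 ω) (X k ω)) ∧
      (∀ k, k < n → k ≠ 1 → dist (X 1 ω) (X j ω) ≤ dist (X 1 ω) (X k ω))}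
    rw [Set.setOf_exists]
    refine MeasurableSet.iUnion fun j => ?_
    by_cases hj : j < n ∧ j ≠ 0 ∧ j ≠ 1
    · have : {ω : Ω | j < n ∧ j ≠ 0 ∧ j ≠ 1 ∧
          (∀ k, k < n → k ≠ 0 → dist (X 0 ω) (X j ω) ≤ dist (X 0 ω) (X k ω)) ∧
          (∀ k, k < n → k ≠ 1 → dist (X 1 ω) (X j ω) ≤ dist (X 1 ω) (X k ω))} =
          (⋂ k, ⋂ (_ : k < n), ⋂ (_ : k ≠ 0), {ω : Ω | dist (X 0 ω) (X j ω) ≤ dist (X 0 ω) (X k ω)}) ∩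
          (⋂ k, ⋂ (_ : k < n), ⋂ (_ : k ≠ 1), {ω : Ω | dist (X 1 ω) (X j ω) ≤ dist (X 1 ω) (X k ω)}) := by
        ext ω
        simp only [Set.mem_setOf_eq, Set.mem_inter_iff, Set.mem_iInter]
        tauto
      rw [this]
      exact MeasurableSet.inter
        (MeasurableSet.iInter fun k => MeasurableSet.iInter fun _ =>
          MeasurableSet.iInter fun _ => hd 0 j k)
        (MeasurableSet.iInter fun k => MeasurableSet.iInter fun _ =>
          MeasurableSet.iInter fun _ => hd 1 j k)
    · have : {ω : Ω | j < n ∧ j ≠ 0 ∧ j ≠ 1 ∧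
          (∀ k, k < n → k ≠ 0 → dist (X 0 ω) (X j ω) ≤ dist (X 0 ω) (X k ω)) ∧
          (∀ k, k < n → k ≠ 1 → dist (X 1 ω) (X j ω) ≤ dist (X 1 ω) (X k ω))} = ∅ := by
        ext ω; simp only [Set.mem_setOf_eq, Set.mem_empty_iff_false, iff_false]
        tauto
      rw [this]; exact MeasurableSet.empty
  -- if nearest neighbours coincide, ω ∈ M n
  have hsub : ∀ n, 2 ≤ n → ∀ ω, IsNNFun X N ω → N n 0 ω = N n 1 ω → ω ∈ M n := by
    intro n hn ω hNN heq
    obtain ⟨h0lt, h0ne, h0min⟩ := hNN n hn 0 (by omega)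
    obtain ⟨h1lt, h1ne, h1min⟩ := hNN n hn 1 (by omega)
    refine ⟨N n 0 ω, h0lt, h0ne, by rw [heq]; exact h1ne, ?_, ?_⟩
    · intro k hk hk0
      rcases eq_or_ne k (N n 0 ω) with h | h
      · rw [h]
      · exact (h0min k hk hk0 h).le
    · intro k hk hk1
      rw [heq]
      rcases eq_or_ne k (N n 1 ω) with h | h
      · rw [h]
      · exact (h1min k hk hk1 h).le
  -- a.e. eventually ω ∉ M n
  have hMev : ∀ᵐ ω ∂P, ∀ᶠ n in atTop, ω ∉ M n := by
    filter_upwards [hN, hA3, hA2 0, hA2 1] with ω hNN h3 h20 h21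
    by_cases hX01 : X 0 ω = X 1 ω
    · filter_upwards [eventually_ge_atTop 2] with n hn
      rintro ⟨j, hjn, hj0, hj1, hc0, _⟩
      obtain ⟨h0lt, h0ne, h0min⟩ := hNN n hn 0 (by omega)
      have hd01 : dist (X 0 ω) (X 1 ω) = 0 := by rw [hX01, dist_self]
      have hN01 : N n 0 ω = 1 := by
        by_contra h
        have := h0min 1 (by omega) (by omega) (fun h' => h h'.symm)
        rw [hd01] at this
        exact absurd this (not_lt.2 dist_nonneg)
      have h1 := h0min j hjn hj0 (by rw [hN01]; exact hj1)
      have h2 := hc0 1 (by omega) (by omega)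
      rw [hN01, hd01] at h1
      rw [hd01] at h2
      linarith
    · have hδ : 0 < dist (X 0 ω) (X 1 ω) := dist_pos.2 hX01
      filter_upwards [key ω hNN h3 0 h20 (dist (X 0 ω) (X 1 ω) / 2) (by linarith),
        key ω hNN h3 1 h21 (dist (X 0 ω) (X 1 ω) / 2) (by linarith),
        eventually_ge_atTop 2] with n k0 k1 hn
      rintro ⟨j, hjn, hj0, hj1, hc0, hc1⟩
      obtain ⟨h0lt, h0ne, _⟩ := hNN n hn 0 (by omega)
      obtain ⟨h1lt, h1ne, _⟩ := hNN n hn 1 (by omega)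
      have d0 : dist (X 0 ω) (X j ω) ≤ dist (X 0 ω) (X (N n 0 ω) ω) := hc0 _ h0lt h0ne
      have d1 : dist (X 1 ω) (X j ω) ≤ dist (X 1 ω) (X (N n 1 ω) ω) := hc1 _ h1lt h1ne
      have tri := dist_triangle (X 0 ω) (X j ω) (X 1 ω)
      rw [dist_comm (X (N n 0 ω) ω) (X 0 ω)] at k0
      rw [dist_comm (X (N n 1 ω) ω) (X 1 ω)] at k1
      rw [dist_comm (X j ω) (X 1 ω)] at tri
      linarith
  -- the tail sets
  set T : ℕ → Set Ω := fun n => ⋃ m, ⋃ (_ : n ≤ m), M m with hT_def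
  have hTmeas : ∀ n, MeasurableSet (T n) :=
    fun n => MeasurableSet.iUnion fun m => MeasurableSet.iUnion fun _ => hMmeas m
  have hTanti : Antitone T := by
    intro a b hab ω hω
    obtain ⟨m, hm⟩ := Set.mem_iUnion.1 hω
    obtain ⟨hbm, hωm⟩ := Set.mem_iUnion.1 hm
    exact Set.mem_iUnion.2 ⟨m, Set.mem_iUnion.2 ⟨hab.trans hbm, hωm⟩⟩
  have hTnull : P (⋂ n, T n) = 0 := by
    rw [measure_eq_zero_iff_ae_notMem]
    filter_upwards [hMev] with ω hω
    obtain ⟨n₀, hn₀⟩ := hω.exists_forall_of_atTop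
    intro hmem
    obtain ⟨m, hm⟩ := Set.mem_iUnion.1 (Set.mem_iInter.1 hmem n₀)
    obtain ⟨hm1, hm2⟩ := Set.mem_iUnion.1 hm
    exact hn₀ m hm1 hm2
  have hTtend : Tendsto (fun n => P (T n)) atTop (nhds 0) := by
    have := tendsto_measure_iInter_atTop (μ := P) (s := T)
      (fun n => (hTmeas n).nullMeasurableSet) hTanti ⟨0, measure_ne_top P _⟩
    rwa [hTnull] at this
  refine tendsto_of_tendsto_of_tendsto_of_le_of_le' tendsto_const_nhds hTtend
    (Eventually.of_forall fun n => zero_le) ?_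
  filter_upwards [eventually_ge_atTop 2] with n hn
  have hsubset : {ω | N n 0 ω = N n 1 ω} ⊆ T n ∪ {ω | ¬ IsNNFun X N ω} := by
    intro ω hω
    by_cases hG : IsNNFun X N ω
    · exact Or.inl (Set.mem_iUnion.2 ⟨n, Set.mem_iUnion.2 ⟨le_refl n, hsub n hn ω hG hω⟩⟩)
    · exact Or.inr hG
  calc P {ω | N n 0 ω = N n 1 ω} ≤ P (T n ∪ {ω | ¬ IsNNFun X N ω}) := measure_mono hsubset
    _ ≤ P (T n) + P {ω | ¬ IsNNFun X N ω} := measure_union_le _ _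
    _ = P (T n) := by rw [ae_iff.1 hN, add_zero]
end
end

section
/- det(Σ) = (1+w)^{K(K−1)/2} · (1−w)^{(K−1)(K−2)/2} · ∏_{i=1}^{K} p_i^{2(K−1)}. -/
open Matrix

open Kronecker

namespace DetSigmaAux

/-- The swap permutation matrix on pairs. -/
def swapT (n : ℕ) : Matrix (Fin n × Fin n) (Fin n × Fin n) ℝ :=
  Matrix.of fun a b => if a.1 = b.2 ∧ a.2 = b.1 then 1 else 0

lemma swapT_mul (n : ℕ) (N : Matrix (Fin n × Fin n) (Fin n × Fin n) ℝ)
    (a b : Fin n × Fin n) : (swapT n * N) a b = N (a.2, a.1) b := by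
  rw [Matrix.mul_apply, Finset.sum_eq_single (a.2, a.1)]
  · simp [swapT]
  · rintro ⟨c1, c2⟩ _ hc
    simp only [swapT, Matrix.of_apply]
    rw [if_neg, zero_mul]
    rintro ⟨h1, h2⟩
    exact hc (by simp [Prod.ext_iff, h1.symm, h2.symm])
  · simp

abbrev Delta (n : ℕ) := {x : Fin n × Fin n // x.1 < x.2}

def ff (n : ℕ) : (Fin n ⊕ Fin 2 × Delta n) → Fin n × Fin n
  | Sum.inl a => (a, a)
  | Sum.inr (i, P) => if i = 0 then P.1 else (P.1.2, P.1.1)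

lemma ff_bij (n : ℕ) : Function.Bijective (ff n) := by
  constructor
  · rintro (a | ⟨i, ⟨⟨x1, x2⟩, hx⟩⟩) (b | ⟨j, ⟨⟨y1, y2⟩, hy⟩⟩) h
    · simp only [ff, Prod.mk.injEq] at h
      exact congrArg Sum.inl h.1
    · exfalso
      by_cases hj : j = 0 <;> simp [ff, hj, Prod.ext_iff] at h <;>
        (rcases h with ⟨rfl, rfl⟩; exact lt_irrefl _ hy)
    · exfalso
      by_cases hi : i = 0 <;> simp [ff, hi, Prod.ext_iff] at h <;>
        (rcases h with ⟨rfl, rfl⟩; exact lt_irrefl _ hx)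
    · by_cases hi : i = 0 <;> by_cases hj : j = 0 <;>
        simp only [ff, hi, hj, if_true, if_false, if_pos, if_neg, Prod.mk.injEq,
          reduceIte] at h
      · subst hi; subst hj
        rcases h with ⟨rfl, rfl⟩; rfl
      · exfalso
        rcases h with ⟨rfl, rfl⟩; exact lt_asymm hx hy
      · exfalso
        rcases h with ⟨rfl, rfl⟩; exact lt_asymm hx hy
      · have hij : i = j := by
          rw [Fin.eq_one_of_ne_zero i hi, Fin.eq_one_of_ne_zero j hj]
        rcases h with ⟨rfl, rfl⟩
        rw [hij]
  · rintro ⟨x, y⟩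
    rcases lt_trichotomy x y with h | h | h
    · exact ⟨Sum.inr (0, ⟨(x, y), h⟩), by simp [ff]⟩
    · exact ⟨Sum.inl x, by simp [ff, h]⟩
    · exact ⟨Sum.inr (1, ⟨(y, x), h⟩), by simp [ff]⟩

lemma det_one_add_smul_swapT (n : ℕ) (w : ℝ) :
    (1 + w • swapT n).det =
      (1 + w) ^ (n * (n + 1) / 2) * (1 - w) ^ (n * (n - 1) / 2) := by
  classical
  set e : (Fin n ⊕ Fin 2 × Delta n) ≃ (Fin n × Fin n) :=
    Equiv.ofBijective _ (ff_bij n) with he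
  have hcard : n + 2 * Fintype.card (Delta n) = n * n := by
    have := Fintype.card_congr e
    simpa [Fintype.card_sum, Fintype.card_prod, two_mul, mul_comm] using this
  have hsub : (1 + w • swapT n).submatrix e e =
      Matrix.fromBlocks ((1 + w) • 1) 0 0
        (Matrix.blockDiagonal fun _ : Delta n => !![(1 : ℝ), w; w, 1]) := by
    ext x y
    have hex : ∀ z, e z = ff n z := fun z => rfl
    rcases x with a | ⟨i, ⟨⟨x1, x2⟩, hx⟩⟩ <;> rcases y with b | ⟨j, ⟨⟨y1, y2⟩, hy⟩⟩
    · by_cases hab : a = b <;>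
        simp [hex, ff, Matrix.one_apply, swapT, Prod.ext_iff, hab]
    · have hy' : y1 ≠ y2 := ne_of_lt hy
      have h1 : ¬(a = y1 ∧ a = y2) := fun h => hy' (h.1.symm.trans h.2)
      have h2 : ¬(a = y2 ∧ a = y1) := fun h => hy' (h.2.symm.trans h.1)
      fin_cases j <;>
        simp [hex, ff, Matrix.one_apply, swapT, Prod.ext_iff, h1, h2]
    · have hx' : x1 ≠ x2 := ne_of_lt hx
      have h1 : ¬(x1 = b ∧ x2 = b) := fun h => hx' (h.1.trans h.2.symm)
      have h2 : ¬(x2 = b ∧ x1 = b) := fun h => hx' (h.2.trans h.1.symm)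
      fin_cases i <;>
        simp [hex, ff, Matrix.one_apply, swapT, Prod.ext_iff, h1, h2]
    · have hA : ¬(x1 = y2 ∧ x2 = y1) := by
        rintro ⟨rfl, rfl⟩; exact lt_asymm hx hy
      have hB : ¬(x2 = y1 ∧ x1 = y2) := fun h => hA ⟨h.2, h.1⟩
      have hC : (x2 = y2 ∧ x1 = y1) ↔ (x1 = y1 ∧ x2 = y2) := and_comm
      fin_cases i <;> fin_cases j <;>
        simp [hex, ff, Matrix.one_apply, swapT, Prod.ext_iff,
          Matrix.blockDiagonal_apply, Subtype.ext_iff, hA, hB, hC]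
  have hdet := (Matrix.det_submatrix_equiv_self e (1 + w • swapT n)).symm
  rw [hdet, hsub, Matrix.det_fromBlocks_zero₁₂, Matrix.det_smul, Matrix.det_one,
    Matrix.det_blockDiagonal]
  simp only [Matrix.det_fin_two_of, Finset.prod_const, Finset.card_univ, mul_one,
    Fintype.card_fin]
  have h1 : (1 : ℝ) - w * w = (1 + w) * (1 - w) := by ring
  rw [h1, mul_pow, ← mul_assoc, ← pow_add]
  have e1 : n * (n + 1) = n * n + n := by ring
  have e2 : n * (n - 1) = n * n - n := by
    rcases n with _ | m
    · rfl
    · have h4 : (m + 1) * (m + 1) = (m + 1) * m + (m + 1) := by ring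
      simp only [Nat.add_sub_cancel]
      omega
  have h2 : n + Fintype.card (Delta n) = n * (n + 1) / 2 := by omega
  have h3 : Fintype.card (Delta n) = n * (n - 1) / 2 := by omega
  rw [h2, h3]

lemma det_M (n : ℕ) (q : Fin n → ℝ) :
    (Matrix.of fun i j : Fin n => q j - if i = j then 1 else 0).det =
      (-1) ^ n * (1 - ∑ i, q i) := by
  have hM : (Matrix.of fun i j : Fin n => q j - if i = j then 1 else 0) =
      (-1 : ℝ) • (1 + Matrix.replicateCol Unit (fun _ => (-1 : ℝ)) * Matrix.replicateRow Unit q) := by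
    ext i j
    simp [Matrix.mul_apply, Matrix.one_apply]
    split_ifs <;> ring
  rw [hM, Matrix.det_smul, Matrix.det_one_add_replicateCol_mul_replicateRow, Fintype.card_fin]
  simp [dotProduct]
  ring

end DetSigmaAux

open DetSigmaAux in
/-- Lemma S2 (determinant of `Σ`): with `p_K := 1 − Σ_{i=1}^{K−1} p_i`,
`det Σ = (1+w)^{K(K−1)/2} (1−w)^{(K−1)(K−2)/2} ∏_{i=1}^K p_i^{2(K−1)}`.
The rows and columns of `Σ` are indexed by pairs `(a,b) : Fin (K−1) × Fin (K−1)`,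
encoding the indices `k = a+1`, `l = b+1` of the paper. -/
theorem det_Sigma (K : ℕ) (hK : 2 ≤ K) (p : ℕ → ℝ) (w : ℝ)
    (hpK : p K = 1 - ∑ i ∈ Finset.Icc 1 (K - 1), p i)
    (S : Matrix (Fin (K - 1) × Fin (K - 1)) (Fin (K - 1) × Fin (K - 1)) ℝ)
    (hS : ∀ a b : Fin (K - 1) × Fin (K - 1),
      S a b =
        p ((a.1 : ℕ) + 1) * p ((a.2 : ℕ) + 1) * p ((b.1 : ℕ) + 1) * p ((b.2 : ℕ) + 1) * (1 + w)
        - p ((a.1 : ℕ) + 1) * p ((a.2 : ℕ) + 1) * p ((b.2 : ℕ) + 1) *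
            ((if (a.1 : ℕ) = (b.1 : ℕ) then 1 else 0) +
              w * (if (a.2 : ℕ) = (b.1 : ℕ) then 1 else 0))
        - p ((a.1 : ℕ) + 1) * p ((a.2 : ℕ) + 1) * p ((b.1 : ℕ) + 1) *
            ((if (a.2 : ℕ) = (b.2 : ℕ) then 1 else 0) +
              w * (if (a.1 : ℕ) = (b.2 : ℕ) then 1 else 0))
        + p ((a.1 : ℕ) + 1) * p ((a.2 : ℕ) + 1) *
            ((if (a.1 : ℕ) = (b.1 : ℕ) ∧ (a.2 : ℕ) = (b.2 : ℕ) then 1 else 0) +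
              w * (if (a.1 : ℕ) = (b.2 : ℕ) ∧ (a.2 : ℕ) = (b.1 : ℕ) then 1 else 0))) :
    S.det = (1 + w) ^ (K * (K - 1) / 2) * (1 - w) ^ ((K - 1) * (K - 2) / 2) *
      ∏ i ∈ Finset.Icc 1 K, p i ^ (2 * (K - 1)) := by
  classical
  obtain ⟨n, rfl⟩ : ∃ n, K = n + 1 := ⟨K - 1, by omega⟩
  have hn : 1 ≤ n := by omega
  simp only [Nat.add_sub_cancel] at hpK hS ⊢
  set M : Matrix (Fin n) (Fin n) ℝ :=
    Matrix.of (fun i j : Fin n => p ((j : ℕ) + 1) - if i = j then 1 else 0) with hM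
  set D : Matrix (Fin n × Fin n) (Fin n × Fin n) ℝ :=
    Matrix.diagonal (fun a : Fin n × Fin n => p ((a.1 : ℕ) + 1) * p ((a.2 : ℕ) + 1)) with hD
  have hBN : ∀ a b : Fin n × Fin n, ((1 + w • swapT n) * (M ⊗ₖ M)) a b
      = (M ⊗ₖ M) a b + w * (M ⊗ₖ M) (a.2, a.1) b := by
    intro a b
    rw [Matrix.add_mul, Matrix.one_mul, Matrix.smul_mul, Matrix.add_apply,
      Matrix.smul_apply, swapT_mul, smul_eq_mul]
  have hfact : S = (D * ((1 + w • swapT n) * (M ⊗ₖ M)) :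
      Matrix (Fin n × Fin n) (Fin n × Fin n) ℝ) := by
    ext a b
    rw [hS, hD, Matrix.diagonal_mul, hBN]
    simp only [Matrix.kroneckerMap_apply, hM, Matrix.of_apply, Fin.ext_iff, ite_and]
    split_ifs <;> ring
  rw [hfact, Matrix.det_mul, Matrix.det_mul, hD, Matrix.det_diagonal,
    det_one_add_smul_swapT, Matrix.det_kronecker, hM, det_M, Fintype.card_fin]
  have hsum : ∑ i : Fin n, p ((i : ℕ) + 1) = ∑ i ∈ Finset.Icc 1 n, p i := by
    rw [Fin.sum_univ_eq_sum_range (fun i => p (i + 1)) n, ← Finset.Ico_add_one_right_eq_Icc,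
      Finset.sum_Ico_eq_sum_range]
    simp [add_comm]
  have hprod : ∏ i : Fin n, p ((i : ℕ) + 1) = ∏ i ∈ Finset.Icc 1 n, p i := by
    rw [Fin.prod_univ_eq_prod_range (fun i => p (i + 1)) n, ← Finset.Ico_add_one_right_eq_Icc,
      Finset.prod_Ico_eq_prod_range]
    simp [add_comm]
  have hdetD : ∏ a : Fin n × Fin n, (p ((a.1 : ℕ) + 1) * p ((a.2 : ℕ) + 1))
      = (∏ i ∈ Finset.Icc 1 n, p i) ^ (2 * n) := by
    rw [Fintype.prod_prod_type]
    simp only [Finset.prod_mul_distrib, Finset.prod_const, Finset.card_univ,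
      Fintype.card_fin, Finset.prod_pow]
    rw [hprod, ← pow_add, two_mul]
  have hcast : (∏ i : Fin (n + 1 - 1) × Fin (n + 1 - 1), p ((i.1 : ℕ) + 1) * p ((i.2 : ℕ) + 1))
      = ∏ a : Fin n × Fin n, p ((a.1 : ℕ) + 1) * p ((a.2 : ℕ) + 1) := rfl
  rw [hcast, hdetD, hsum, ← hpK]
  have hm : ((-1 : ℝ) ^ n * p (n + 1)) ^ n * ((-1 : ℝ) ^ n * p (n + 1)) ^ n
      = p (n + 1) ^ (2 * n) := by
    rw [← pow_add, ← two_mul, mul_pow, ← pow_mul]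
    have : Even (n * (2 * n)) := ⟨n * n, by ring⟩
    rw [this.neg_one_pow, one_mul]
  rw [hm]
  rw [Finset.prod_Icc_succ_top (by omega : 1 ≤ n + 1), Finset.prod_pow]
  have h1 : (n + 1) * n / 2 = n * (n + 1) / 2 := by rw [Nat.mul_comm]
  have h2 : n + 1 - 2 = n - 1 := by omega
  rw [h1, h2]
  ring
end
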